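/- arXiv:1102.4595 — 2 statements merged into one kernel-verified Lean document; each statement's English description precedes it below -/
import Mathlib

section
/- Let $\alpha$ be an active root of a connected solvable spherical subgroup $H$ standardly embedded in $B$, and let $\pi(\alpha)$ be its associated simple root. If $\Delta(\alpha) = \Delta \cap \langle \mathrm{Supp}(\alpha)\rangle$ is of type $A$, $D$, or $E$, then $\alpha = \sum_{\gamma \in \mathrm{Supp}(\alpha)} \gamma$, i.e., $\alpha$ is the sum of all simple roots in its support, each with coefficient one. -/
open scoped InnerProductSpace

/-- A reduced crystallographic root system in a Euclidean space `V`, together with a chosen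
base of simple roots and the (integer) coordinates of each root in this base. -/
structure RootSystemData (V : Type) [NormedAddCommGroup V] [InnerProductSpace ℝ V] where
  /-- the set of roots -/
  roots : Set V
  /-- the set of simple roots (the base) -/
  simples : Finset V
  finite : roots.Finite
  ne_zero : ∀ α ∈ roots, α ≠ (0 : V)
  neg_mem : ∀ α ∈ roots, -α ∈ roots
  reduced : ∀ α ∈ roots, (2 : ℝ) • α ∉ roots
  reflect_mem : ∀ α ∈ roots, ∀ β ∈ roots,
    β - (2 * ⟪α, β⟫_ℝ / ⟪α, α⟫_ℝ) • α ∈ roots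
  cartan_int : ∀ α ∈ roots, ∀ β ∈ roots, ∃ n : ℤ,
    2 * ⟪α, β⟫_ℝ / ⟪α, α⟫_ℝ = (n : ℝ)
  simples_mem : ∀ γ ∈ simples, γ ∈ roots
  simples_indep : LinearIndependent ℝ (fun γ : simples => (γ : V))
  /-- `coeff α γ` is the coefficient of the simple root `γ` in the root `α` -/
  coeff : V → V → ℤ
  coeff_spec : ∀ α ∈ roots, α = ∑ γ ∈ simples, coeff α γ • γ
  coeff_sign : ∀ α ∈ roots,
    (∀ γ ∈ simples, 0 ≤ coeff α γ) ∨ (∀ γ ∈ simples, coeff α γ ≤ 0)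

namespace RootSystemData

variable {V : Type} [NormedAddCommGroup V] [InnerProductSpace ℝ V]

/-- The set of positive roots with respect to the base. -/
def pos (R : RootSystemData V) : Set V :=
  {α ∈ R.roots | ∀ γ ∈ R.simples, 0 ≤ R.coeff α γ}

/-- The support of a root: the simple roots occurring in it with nonzero coefficient. -/
def Supp (R : RootSystemData V) (α : V) : Finset V :=
  R.simples.filter fun γ => R.coeff α γ ≠ 0

/-- The height of a root: the sum of its coefficients over the simple roots. -/
def height (R : RootSystemData V) (α : V) : ℤ :=
  ∑ γ ∈ R.simples, R.coeff α γ

/-- `s(α)`: the number of unordered representations of `α` as a sum of two positive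
roots. -/
noncomputable def numDecomp (R : RootSystemData V) (α : V) : ℕ :=
  {z : Sym2 V | ∃ β ∈ R.pos, ∃ γ ∈ R.pos, z = Sym2.mk β γ ∧ β + γ = α}.ncard

end RootSystemData

/-- The Lie-theoretic data attached to a connected solvable subgroup `H = S ⋉ N` of a
connected semisimple complex algebraic group `G`, standardly embedded in a Borel subgroup
`B = T ⋉ U`:
* the root system of `G` with respect to `T`, with the base determined by `B`;
* the restriction map `τ : 𝔛(T) ⊗ ℚ → 𝔛(S) ⊗ ℚ` of characters from `T` to the maximal
  torus `S = H ∩ T` of `H` (modelled as a linear map of vector spaces, `W = 𝔛(S) ⊗ ℚ`);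
* the nilpotent Lie algebra `L = 𝔲` of the maximal unipotent subgroup `U`, with its root
  space decomposition `𝔲 = ⨁_{α ∈ Δ₊} 𝔤_α`;
* the Lie algebra `𝔫 ⊆ 𝔲` of the unipotent radical `N = H ∩ U` of `H`, which is a
  subalgebra and is a sum of its `S`-weight components. -/
structure SphericalSetup (V : Type) [NormedAddCommGroup V] [InnerProductSpace ℝ V]
    (W : Type) [AddCommGroup W] [Module ℝ W]
    (L : Type) [LieRing L] [LieAlgebra ℂ L] extends RootSystemData V where
  /-- restriction of characters from `T` to `S` -/
  τ : V →ₗ[ℝ] W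
  /-- the root spaces `𝔤_α ⊆ 𝔲` -/
  g : V → Submodule ℂ L
  g_dim : ∀ α ∈ toRootSystemData.pos, Module.finrank ℂ (g α) = 1
  g_bot : ∀ α, α ∉ toRootSystemData.pos → g α = ⊥
  g_top : (⨆ α ∈ toRootSystemData.pos, g α) = (⊤ : Submodule ℂ L)
  bracket_mem : ∀ (α β : V), ∀ x ∈ g α, ∀ y ∈ g β, ⁅x, y⁆ ∈ g (α + β)
  bracket_ne : ∀ α ∈ toRootSystemData.pos, ∀ β ∈ toRootSystemData.pos,
    α + β ∈ toRootSystemData.pos → ∃ x ∈ g α, ∃ y ∈ g β, ⁅x, y⁆ ≠ (0 : L)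
  /-- the Lie algebra `𝔫` of the unipotent radical `N` of `H` -/
  n : Submodule ℂ L
  n_bracket : ∀ x ∈ n, ∀ y ∈ n, ⁅x, y⁆ ∈ n
  n_weight : n = ⨆ w : W, n ⊓ ⨆ α ∈ {a ∈ toRootSystemData.pos | τ a = w}, g α

namespace SphericalSetup

variable {V : Type} [NormedAddCommGroup V] [InnerProductSpace ℝ V]
  {W : Type} [AddCommGroup W] [Module ℝ W]
  {L : Type} [LieRing L] [LieAlgebra ℂ L]

/-- The `S`-weight subspace `𝔲_w ⊆ 𝔲` of weight `w`. -/
def uSp (S : SphericalSetup V W L) (w : W) : Submodule ℂ L :=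
  ⨆ α ∈ {a ∈ S.pos | S.τ a = w}, S.g α

/-- `c_w`: the codimension of `𝔫_w = 𝔫 ∩ 𝔲_w` in `𝔲_w`. -/
noncomputable def c (S : SphericalSetup V W L) (w : W) : ℕ :=
  Module.finrank ℂ (S.uSp w) - Module.finrank ℂ ↥(S.n ⊓ S.uSp w)

/-- The sphericity of `H` in `G`, via the criterion of Theorem `solvable_spherical`:
`c_w ≤ 1` for every weight `w`, and the weights `w` with `c_w = 1` are linearly
independent in `𝔛(S) ⊗ ℚ`. -/
def Spherical (S : SphericalSetup V W L) : Prop :=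
  (∀ w : W, S.c w ≤ 1) ∧
    LinearIndependent ℝ (fun w : {w : W // S.c w = 1} => (w : W))

/-- The set `Ψ` of active roots: positive roots `α` with `𝔤_α ⊄ 𝔫`. -/
def active (S : SphericalSetup V W L) : Set V :=
  {α ∈ S.pos | ¬ S.g α ≤ S.n}

/-- The family `F(α)` of active roots generated by an active root `α`: the root `α`
together with all active roots subordinate to it. -/
def family (S : SphericalSetup V W L) (α : V) : Set V :=
  insert α {β ∈ S.active | α - β ∈ S.pos}

end SphericalSetup

section AuxRoot

open Submodule Module
open scoped Classical

variable {V : Type} [NormedAddCommGroup V] [InnerProductSpace ℝ V]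
variable (R : RootSystemData V)

theorem ar_coeff_unique {c d : V → ℤ}
    (h : ∑ γ ∈ R.simples, c γ • γ = ∑ γ ∈ R.simples, d γ • γ) :
    ∀ γ ∈ R.simples, c γ = d γ := by
  intro γ hγ
  have hli := linearIndependent_iff'.mp R.simples_indep R.simples.attach
    (fun γ => ((c γ - d γ : ℤ) : ℝ))
  have hsum : ∑ γ ∈ R.simples.attach, ((c ↑γ - d ↑γ : ℤ) : ℝ) • (γ : V) = 0 := by
    rw [Finset.sum_attach R.simples (fun γ => ((c γ - d γ : ℤ) : ℝ) • γ)]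
    have : ∀ γ ∈ R.simples, ((c γ - d γ : ℤ) : ℝ) • γ = c γ • γ - d γ • γ := by
      intro γ _
      rw [Int.cast_smul_eq_zsmul, sub_smul]
    rw [Finset.sum_congr rfl this, Finset.sum_sub_distrib, h, sub_self]
  have := hli hsum ⟨γ, hγ⟩ (Finset.mem_attach _ _)
  have : (c γ - d γ : ℤ) = 0 := by exact_mod_cast this
  omega

theorem ar_coeff_ext {c : V → ℤ} {δ : V} (hδ : δ ∈ R.roots)
    (h : δ = ∑ γ ∈ R.simples, c γ • γ) : ∀ γ ∈ R.simples, R.coeff δ γ = c γ :=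
  ar_coeff_unique R ((R.coeff_spec δ hδ).symm.trans h)

theorem ar_coeff_simple {γ γ' : V} (hγ : γ ∈ R.simples) (hγ' : γ' ∈ R.simples) :
    R.coeff γ γ' = if γ' = γ then 1 else 0 := by
  classical
  refine ar_coeff_ext R (c := fun γ'' => if γ'' = γ then 1 else 0)
    (R.simples_mem γ hγ) ?_ γ' hγ'
  have : ∀ γ'' ∈ R.simples, (if γ'' = γ then (1:ℤ) else 0) • γ'' =
      if γ'' = γ then γ'' else 0 := by
    intro γ'' _; by_cases h : γ'' = γ <;> simp [h]
  rw [Finset.sum_congr rfl this, Finset.sum_ite_eq' R.simples γ (fun γ'' => γ'')]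
  simp [hγ]

end AuxRoot
section AuxRoot2

open Submodule Module
open scoped Classical

variable {V : Type} [NormedAddCommGroup V] [InnerProductSpace ℝ V]
variable (R : RootSystemData V)

theorem ar_coeff_add {β γ : V} (hβ : β ∈ R.roots) (hγ : γ ∈ R.roots)
    (hs : β + γ ∈ R.roots) :
    ∀ γ' ∈ R.simples, R.coeff (β + γ) γ' = R.coeff β γ' + R.coeff γ γ' := by
  refine ar_coeff_ext R (c := fun γ' => R.coeff β γ' + R.coeff γ γ') hs ?_
  conv_lhs => rw [R.coeff_spec β hβ, R.coeff_spec γ hγ]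
  rw [← Finset.sum_add_distrib]
  exact Finset.sum_congr rfl fun γ' _ => by rw [add_smul]

theorem ar_coeff_sub_zsmul {δ γ : V} (hδ : δ ∈ R.roots) (hγ : γ ∈ R.simples)
    (m : ℤ) (hs : δ - (m : ℝ) • γ ∈ R.roots) :
    ∀ γ' ∈ R.simples, R.coeff (δ - (m : ℝ) • γ) γ' =
      R.coeff δ γ' - (if γ' = γ then m else 0) := by
  refine ar_coeff_ext R (c := fun γ' => R.coeff δ γ' - if γ' = γ then m else 0) hs ?_
  have h1 : ∀ γ' ∈ R.simples, (R.coeff δ γ' - if γ' = γ then m else 0) • γ' =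
      R.coeff δ γ' • γ' - (if γ' = γ then m • γ' else 0) := by
    intro γ' _; by_cases h : γ' = γ <;> simp [h, sub_smul]
  rw [Finset.sum_congr rfl h1, Finset.sum_sub_distrib,
    Finset.sum_ite_eq' R.simples γ (fun γ' => m • γ'), ← R.coeff_spec δ hδ]
  simp [hγ, Int.cast_smul_eq_zsmul]

theorem ar_pos_of_coeff_pos {δ γ' : V} (hδ : δ ∈ R.roots) (hγ' : γ' ∈ R.simples)
    (h : 0 < R.coeff δ γ') : δ ∈ R.pos := by
  rcases R.coeff_sign δ hδ with hs | hs
  · exact ⟨hδ, hs⟩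
  · exact absurd (hs γ' hγ') (by omega)

theorem ar_pos_exists_coeff_pos {δ : V} (hδ : δ ∈ R.pos) :
    ∃ γ' ∈ R.simples, 0 < R.coeff δ γ' := by
  by_contra h
  push_neg at h
  have hz : ∀ γ' ∈ R.simples, R.coeff δ γ' = 0 := fun γ' hγ' =>
    le_antisymm (h γ' hγ') (hδ.2 γ' hγ')
  have : δ = 0 := by
    rw [R.coeff_spec δ hδ.1]
    exact Finset.sum_eq_zero fun γ' hγ' => by rw [hz γ' hγ', zero_smul]
  exact R.ne_zero δ hδ.1 this

theorem ar_height_pos {δ : V} (hδ : δ ∈ R.pos) : 1 ≤ R.height δ := by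
  obtain ⟨γ', hγ', hpos⟩ := ar_pos_exists_coeff_pos R hδ
  calc (1:ℤ) ≤ R.coeff δ γ' := hpos
  _ ≤ ∑ γ ∈ R.simples, R.coeff δ γ :=
      Finset.single_le_sum (fun γ hγ => hδ.2 γ hγ) hγ'

theorem ar_mem_span {δ : V} {K : Finset V} (hδ : δ ∈ R.roots)
    (hsupp : R.Supp δ ⊆ K) : δ ∈ span ℝ (K : Set V) := by
  rw [R.coeff_spec δ hδ]
  refine Submodule.sum_mem _ fun γ hγ => ?_
  by_cases h : R.coeff δ γ = 0
  · rw [h, zero_smul]; exact Submodule.zero_mem _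
  · have : γ ∈ K := hsupp (Finset.mem_filter.mpr ⟨hγ, h⟩)
    rw [← Int.cast_smul_eq_zsmul ℝ]
    exact Submodule.smul_mem _ _ (Submodule.subset_span this)

theorem ar_coeff_le_of_add {β γ δ : V} (hβ : β ∈ R.pos) (hγ : γ ∈ R.pos)
    (hδ : δ ∈ R.roots) (h : β + γ = δ) :
    ∀ γ' ∈ R.simples, R.coeff β γ' ≤ R.coeff δ γ' := by
  intro γ' hγ'
  have := ar_coeff_add R hβ.1 hγ.1 (h ▸ hδ)
  rw [h] at this
  have h2 := this γ' hγ'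
  have := hγ.2 γ' hγ'
  omega

theorem ar_supp_subset_of_add {β γ δ : V} (hβ : β ∈ R.pos) (hγ : γ ∈ R.pos)
    (hδ : δ ∈ R.roots) (h : β + γ = δ) : R.Supp β ⊆ R.Supp δ := by
  intro γ' hγ'
  rw [RootSystemData.Supp, Finset.mem_filter] at hγ' ⊢
  refine ⟨hγ'.1, ?_⟩
  have h1 := ar_coeff_le_of_add R hβ hγ hδ h γ' hγ'.1
  have h2 := hβ.2 γ' hγ'.1
  have h3 := hγ'.2
  omega

theorem ar_height_add {β γ δ : V} (hβ : β ∈ R.roots) (hγ : γ ∈ R.roots)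
    (hδ : δ ∈ R.roots) (h : β + γ = δ) : R.height δ = R.height β + R.height γ := by
  unfold RootSystemData.height
  rw [← Finset.sum_add_distrib]
  exact Finset.sum_congr rfl fun γ' hγ' => by
    rw [← ar_coeff_add R hβ hγ (h ▸ hδ) γ' hγ', h]

theorem ar_pos_of_add {β γ δ : V} (hβ : β ∈ R.pos) (hγ : γ ∈ R.pos)
    (hδ : δ ∈ R.roots) (h : β + γ = δ) : δ ∈ R.pos := by
  refine ⟨hδ, fun γ' hγ' => ?_⟩
  have h1 := ar_coeff_le_of_add R hβ hγ hδ h γ' hγ'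
  have h2 := hβ.2 γ' hγ'
  omega

theorem ar_simple_pos {γ : V} (hγ : γ ∈ R.simples) : γ ∈ R.pos := by
  refine ⟨R.simples_mem γ hγ, fun γ' hγ' => ?_⟩
  rw [ar_coeff_simple R hγ hγ']
  split <;> omega

theorem ar_neg_simple_not_pos {γ : V} (hγ : γ ∈ R.simples) : -γ ∉ R.pos := by
  intro hpos
  have h1 : R.coeff (-γ) γ = -1 := by
    have : -γ = ∑ γ' ∈ R.simples, (if γ' = γ then (-1:ℤ) else 0) • γ' := by
      have : ∀ γ' ∈ R.simples, (if γ' = γ then (-1:ℤ) else 0) • γ' =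
          if γ' = γ then -γ' else 0 := by
        intro γ' _; by_cases h : γ' = γ <;> simp [h]
      rw [Finset.sum_congr rfl this, Finset.sum_ite_eq' R.simples γ (fun γ' => -γ')]
      simp [hγ]
    have := ar_coeff_ext R hpos.1 this γ hγ
    simpa using this
  have := hpos.2 γ hγ
  omega

end AuxRoot2
section AuxRoot3

open Submodule Module
open scoped Classical

variable {V : Type} [NormedAddCommGroup V] [InnerProductSpace ℝ V]
variable (R : RootSystemData V) {K : Finset V} {N : ℝ}

theorem ar_parallel (hN : 0 < N)
    (hnorm : ∀ δ ∈ R.roots, δ ∈ span ℝ (K : Set V) → ⟪δ, δ⟫_ℝ = N)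
    {δ ε : V} (hδ : δ ∈ R.roots) (hδK : δ ∈ span ℝ (K : Set V))
    (hε : ε ∈ R.roots) (hεK : ε ∈ span ℝ (K : Set V))
    {c : ℝ} (h : ε = c • δ) : ε = δ ∨ ε = -δ := by
  have h1 : ⟪ε, ε⟫_ℝ = c ^ 2 * ⟪δ, δ⟫_ℝ := by
    rw [h, real_inner_smul_left, real_inner_smul_right]; ring
  rw [hnorm δ hδ hδK, hnorm ε hε hεK] at h1
  have hc : c = 1 ∨ c = -1 := by
    have h2 : (c - 1) * (c + 1) * N = 0 := by ring_nf; nlinarith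
    rcases mul_eq_zero.mp h2 with h3 | h3
    · rcases mul_eq_zero.mp h3 with h4 | h4
      · left; linarith
      · right; linarith
    · exact absurd h3 (ne_of_gt hN)
  rcases hc with rfl | rfl
  · left; rw [h, one_smul]
  · right; rw [h, neg_one_smul]

theorem ar_norm_mul (hN : 0 < N)
    (hnorm : ∀ δ ∈ R.roots, δ ∈ span ℝ (K : Set V) → ⟪δ, δ⟫_ℝ = N)
    {δ ε : V} (hδ : δ ∈ R.roots) (hδK : δ ∈ span ℝ (K : Set V))
    (hε : ε ∈ R.roots) (hεK : ε ∈ span ℝ (K : Set V)) : ‖δ‖ * ‖ε‖ = N := by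
  have h1 : ‖δ‖ ^ 2 = N := by rw [← real_inner_self_eq_norm_sq, hnorm δ hδ hδK]
  have h2 : ‖ε‖ ^ 2 = N := by rw [← real_inner_self_eq_norm_sq, hnorm ε hε hεK]
  have h3 : (‖δ‖ * ‖ε‖ - N) * (‖δ‖ * ‖ε‖ + N) = 0 := by nlinarith
  rcases mul_eq_zero.mp h3 with h4 | h4
  · linarith
  · nlinarith [norm_nonneg δ, norm_nonneg ε]

theorem ar_inner_cases (hN : 0 < N)
    (hnorm : ∀ δ ∈ R.roots, δ ∈ span ℝ (K : Set V) → ⟪δ, δ⟫_ℝ = N)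
    {δ ε : V} (hδ : δ ∈ R.roots) (hδK : δ ∈ span ℝ (K : Set V))
    (hε : ε ∈ R.roots) (hεK : ε ∈ span ℝ (K : Set V))
    (h1 : ε ≠ δ) (h2 : ε ≠ -δ) :
    ⟪δ, ε⟫_ℝ = 0 ∨ ⟪δ, ε⟫_ℝ = N / 2 ∨ ⟪δ, ε⟫_ℝ = -(N / 2) := by
  obtain ⟨n, hn⟩ := R.cartan_int δ hδ ε hε
  rw [hnorm δ hδ hδK] at hn
  have hval : ⟪δ, ε⟫_ℝ = n * N / 2 := by
    field_simp at hn; linarith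
  have habs : |⟪δ, ε⟫_ℝ| < N := by
    have hle : |⟪δ, ε⟫_ℝ| ≤ N := by
      have := abs_real_inner_le_norm δ ε
      rw [ar_norm_mul R hN hnorm hδ hδK hε hεK] at this
      exact this
    rcases lt_or_eq_of_le hle with h | h
    · exact h
    · exfalso
      have hone : |⟪δ, ε⟫_ℝ / (‖δ‖ * ‖ε‖)| = 1 := by
        rw [ar_norm_mul R hN hnorm hδ hδK hε hεK, abs_div, h, abs_of_pos hN,
          div_self (ne_of_gt hN)]
      obtain ⟨-, r, -, hr⟩ := (abs_real_inner_div_norm_mul_norm_eq_one_iff δ ε).mp hone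
      rcases ar_parallel R hN hnorm hδ hδK hε hεK hr with h | h
      · exact h1 h
      · exact h2 h
  have hn1 : |(n : ℝ)| < 2 := by
    rw [hval, abs_div, abs_mul, abs_of_pos hN] at habs
    rw [abs_of_pos (by norm_num : (0:ℝ) < 2)] at habs
    nlinarith [abs_nonneg ((n:ℝ))]
  have hn2 : n = 0 ∨ n = 1 ∨ n = -1 := by
    have h3 : ((|n| : ℤ) : ℝ) < 2 := by rwa [Int.cast_abs]
    have h4 : |n| < 2 := by exact_mod_cast h3
    rcases abs_cases n with ⟨h5, h6⟩ | ⟨h5, h6⟩ <;> rw [h5] at h4 <;> omega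
  rcases hn2 with h | h | h
  · left; rw [hval, h]; ring
  · right; left; rw [hval, h]; ring
  · right; right; rw [hval, h]; ring
end AuxRoot3
section AuxRoot4

open Submodule Module
open scoped Classical

variable {V : Type} [NormedAddCommGroup V] [InnerProductSpace ℝ V]
variable (R : RootSystemData V) {K : Finset V} {N : ℝ}

/-- If `δ`, `ε`, `δ + ε` are all roots in the span of `K`, then `⟪δ, ε⟫ = -N/2`. -/
theorem ar_inner_of_add
    (hnorm : ∀ δ ∈ R.roots, δ ∈ span ℝ (K : Set V) → ⟪δ, δ⟫_ℝ = N)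
    {δ ε : V} (hδ : δ ∈ R.roots) (hδK : δ ∈ span ℝ (K : Set V))
    (hε : ε ∈ R.roots) (hεK : ε ∈ span ℝ (K : Set V))
    (hs : δ + ε ∈ R.roots) : ⟪δ, ε⟫_ℝ = -(N / 2) := by
  have hsK : δ + ε ∈ span ℝ (K : Set V) := Submodule.add_mem _ hδK hεK
  have h1 := hnorm _ hs hsK
  rw [real_inner_add_add_self, hnorm δ hδ hδK, hnorm ε hε hεK] at h1
  linarith

/-- If `δ`, `ε`, `δ - ε` are all roots in the span of `K`, then `⟪δ, ε⟫ = N/2`. -/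
theorem ar_inner_of_sub
    (hnorm : ∀ δ ∈ R.roots, δ ∈ span ℝ (K : Set V) → ⟪δ, δ⟫_ℝ = N)
    {δ ε : V} (hδ : δ ∈ R.roots) (hδK : δ ∈ span ℝ (K : Set V))
    (hε : ε ∈ R.roots) (hεK : ε ∈ span ℝ (K : Set V))
    (hs : δ - ε ∈ R.roots) : ⟪δ, ε⟫_ℝ = N / 2 := by
  have hsK : δ - ε ∈ span ℝ (K : Set V) := Submodule.sub_mem _ hδK hεK
  have h1 := hnorm _ hs hsK
  rw [real_inner_sub_sub_self, hnorm δ hδ hδK, hnorm ε hε hεK] at h1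
  linarith

/-- No root string of length three: `β - γ`, `β`, `β + γ` cannot all be roots. -/
theorem ar_no_string (hN : 0 < N)
    (hnorm : ∀ δ ∈ R.roots, δ ∈ span ℝ (K : Set V) → ⟪δ, δ⟫_ℝ = N)
    {β γ : V} (hβ : β ∈ R.roots) (hβK : β ∈ span ℝ (K : Set V))
    (hγ : γ ∈ R.roots) (hγK : γ ∈ span ℝ (K : Set V))
    (h1 : β - γ ∈ R.roots) (h2 : β + γ ∈ R.roots) : False := by
  have e1 := ar_inner_of_sub R hnorm hβ hβK hγ hγK h1
  have e2 := ar_inner_of_add R hnorm hβ hβK hγ hγK h2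
  rw [e1] at e2
  linarith

/-- If `⟪δ, ε⟫ = N/2` then `δ - ε` is a root. -/
theorem ar_sub_root (hN : 0 < N)
    (hnorm : ∀ δ ∈ R.roots, δ ∈ span ℝ (K : Set V) → ⟪δ, δ⟫_ℝ = N)
    {δ ε : V} (hδ : δ ∈ R.roots) (hε : ε ∈ R.roots) (hεK : ε ∈ span ℝ (K : Set V))
    (h : ⟪ε, δ⟫_ℝ = N / 2) : δ - ε ∈ R.roots := by
  have := R.reflect_mem ε hε δ hδ
  rw [hnorm ε hε hεK, h] at this
  have h2 : 2 * (N / 2) / N = (1 : ℝ) := by field_simp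
  rwa [h2, one_smul] at this

end AuxRoot4
section AuxRoot5

open Submodule Module
open scoped Classical

variable {V : Type} [NormedAddCommGroup V] [InnerProductSpace ℝ V]
variable (R : RootSystemData V) {K : Finset V} {N : ℝ}

theorem ar_height_simple {γ : V} (hγ : γ ∈ R.simples) : R.height γ = 1 := by
  unfold RootSystemData.height
  rw [Finset.sum_congr rfl (fun γ' hγ' => ar_coeff_simple R hγ hγ'),
    Finset.sum_ite_eq' R.simples γ (fun _ => (1:ℤ))]
  simp [hγ]

theorem ar_supp_singleton {γ ε : V} (hK : K ⊆ R.simples) (hN : 0 < N)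
    (hnorm : ∀ δ ∈ R.roots, δ ∈ span ℝ (K : Set V) → ⟪δ, δ⟫_ℝ = N)
    (hγ : γ ∈ K) (hε : ε ∈ R.roots) (hsupp : R.Supp ε ⊆ {γ}) :
    ε = γ ∨ ε = -γ := by
  have hγs := hK hγ
  have hγK : γ ∈ span ℝ (K : Set V) := Submodule.subset_span hγ
  have hεc : ε = ((R.coeff ε γ : ℤ) : ℝ) • γ := by
    conv_lhs => rw [R.coeff_spec ε hε]
    rw [Int.cast_smul_eq_zsmul]
    rw [Finset.sum_eq_single_of_mem γ hγs]
    intro γ' hγ' hne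
    have : R.coeff ε γ' = 0 := by
      by_contra h
      have : γ' ∈ ({γ} : Finset V) := hsupp (Finset.mem_filter.mpr ⟨hγ', h⟩)
      simp at this; exact hne this
    rw [this, zero_smul]
  exact ar_parallel R hN hnorm (R.simples_mem γ hγs) hγK hε
    (ar_mem_span R hε (hsupp.trans (Finset.singleton_subset_iff.mpr hγ))) hεc

/-- Reflection of a positive root `ε ≠ γ` in the simple root `γ` is positive. -/
theorem ar_reflect_pos (hK : K ⊆ R.simples) (hN : 0 < N)
    (hnorm : ∀ δ ∈ R.roots, δ ∈ span ℝ (K : Set V) → ⟪δ, δ⟫_ℝ = N)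
    {γ ε : V} (hγ : γ ∈ K) (hε : ε ∈ R.pos) (hsupp : R.Supp ε ⊆ K) (hne : ε ≠ γ)
    {m : ℤ} (hm : ⟪γ, ε⟫_ℝ = m * N / 2) :
    ε - (m : ℝ) • γ ∈ R.pos ∧ R.Supp (ε - (m : ℝ) • γ) ⊆ K ∧
      (∀ γ' ∈ R.simples, R.coeff (ε - (m : ℝ) • γ) γ' =
        R.coeff ε γ' - (if γ' = γ then m else 0)) := by
  have hγs := hK hγ
  have hγr := R.simples_mem γ hγs
  have hγK : γ ∈ span ℝ (K : Set V) := Submodule.subset_span hγ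
  have hroot : ε - (m : ℝ) • γ ∈ R.roots := by
    have := R.reflect_mem γ hγr ε hε.1
    rw [hnorm γ hγr hγK, hm] at this
    have h2 : 2 * (↑m * N / 2) / N = (m : ℝ) := by field_simp
    rwa [h2] at this
  have hcoeff := ar_coeff_sub_zsmul R hε.1 hγs m hroot
  have hsupp' : R.Supp (ε - (m : ℝ) • γ) ⊆ K := by
    intro γ' hγ'
    rw [RootSystemData.Supp, Finset.mem_filter] at hγ'
    by_cases h : γ' = γ
    · rwa [h]
    · have := hcoeff γ' hγ'.1
      rw [if_neg h] at this
      exact hsupp (Finset.mem_filter.mpr ⟨hγ'.1, by omega⟩)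
  refine ⟨?_, hsupp', hcoeff⟩
  -- find a simple root in the support other than γ
  by_cases hcase : ∃ γ' ∈ R.Supp ε, γ' ≠ γ
  · obtain ⟨γ', hγ', hne'⟩ := hcase
    rw [RootSystemData.Supp, Finset.mem_filter] at hγ'
    refine ar_pos_of_coeff_pos R hroot hγ'.1 ?_
    rw [hcoeff γ' hγ'.1, if_neg hne']
    have := hε.2 γ' hγ'.1
    omega
  · exfalso
    push_neg at hcase
    have : R.Supp ε ⊆ {γ} := fun γ' h => Finset.mem_singleton.mpr (hcase γ' h)
    rcases ar_supp_singleton R hK hN hnorm hγ hε.1 this with h | h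
    · exact hne h
    · rw [h] at hε; exact ar_neg_simple_not_pos R hγs hε

/-- Descent: a positive root of height at least `2` supported in `K` has a simple root
`γ` in its support with `δ - γ` again a positive root. -/
theorem ar_descent (hK : K ⊆ R.simples) (hN : 0 < N)
    (hnorm : ∀ δ ∈ R.roots, δ ∈ span ℝ (K : Set V) → ⟪δ, δ⟫_ℝ = N)
    {δ : V} (hδ : δ ∈ R.pos) (hs : R.Supp δ ⊆ K) (hht : 2 ≤ R.height δ) :
    ∃ γ ∈ K, δ - γ ∈ R.pos ∧ R.Supp (δ - γ) ⊆ K ∧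
      R.height (δ - γ) = R.height δ - 1 ∧ ⟪γ, δ⟫_ℝ = N / 2 := by
  have hδK : δ ∈ span ℝ (K : Set V) := ar_mem_span R hδ.1 hs
  have hsum : ⟪δ, δ⟫_ℝ = ∑ γ' ∈ R.simples, (R.coeff δ γ' : ℝ) * ⟪δ, γ'⟫_ℝ := by
    have h0 : ⟪(∑ γ'' ∈ R.simples, R.coeff δ γ'' • γ'' : V), δ⟫_ℝ =
        ∑ γ' ∈ R.simples, (R.coeff δ γ' : ℝ) * ⟪δ, γ'⟫_ℝ := by
      rw [sum_inner]
      exact Finset.sum_congr rfl fun γ' _ => by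
        rw [← Int.cast_smul_eq_zsmul ℝ, real_inner_smul_left, real_inner_comm]
    rw [← R.coeff_spec δ hδ.1] at h0
    exact h0
  have hpos : 0 < ∑ γ' ∈ R.simples, (R.coeff δ γ' : ℝ) * ⟪δ, γ'⟫_ℝ := by
    rw [← hsum, hnorm δ hδ.1 hδK]; exact hN
  have hex : ∃ γ' ∈ R.simples, 0 < (R.coeff δ γ' : ℝ) * ⟪δ, γ'⟫_ℝ := by
    by_contra h
    push_neg at h
    exact absurd (Finset.sum_nonpos h) (not_le.mpr hpos)
  obtain ⟨γ, hγs, hterm⟩ := hex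
  have hcoeff : 0 < R.coeff δ γ := by
    rcases lt_or_eq_of_le (hδ.2 γ hγs) with h | h
    · exact h
    · rw [← h] at hterm; simp at hterm
  have hinner : 0 < ⟪δ, γ⟫_ℝ := by
    by_contra h
    push_neg at h
    have : (R.coeff δ γ : ℝ) * ⟪δ, γ⟫_ℝ ≤ 0 :=
      mul_nonpos_of_nonneg_of_nonpos (by exact_mod_cast le_of_lt hcoeff) h
    linarith
  have hγK : γ ∈ K := hs (Finset.mem_filter.mpr ⟨hγs, by omega⟩)
  have hγspan : γ ∈ span ℝ (K : Set V) := Submodule.subset_span hγK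
  have hγr := R.simples_mem γ hγs
  have hne1 : γ ≠ δ := by
    intro h
    rw [← h, ar_height_simple R hγs] at hht
    omega
  have hne2 : γ ≠ -δ := by
    intro h
    have : δ = -γ := by rw [h, neg_neg]
    rw [this] at hδ
    exact ar_neg_simple_not_pos R hγs hδ
  have hval : ⟪δ, γ⟫_ℝ = N / 2 := by
    rcases ar_inner_cases R hN hnorm hδ.1 hδK hγr hγspan hne1 hne2 with h | h | h
    · rw [h] at hinner; exact absurd hinner (lt_irrefl 0)
    · exact h
    · rw [h] at hinner; linarith
  have hroot : δ - γ ∈ R.roots :=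
    ar_sub_root R hN hnorm hδ.1 hγr hγspan (by rwa [real_inner_comm])
  have h1eq : δ - γ = δ - ((1:ℤ) : ℝ) • γ := by norm_num
  have hcoeffs : ∀ γ' ∈ R.simples, R.coeff (δ - γ) γ' =
      R.coeff δ γ' - (if γ' = γ then 1 else 0) := by
    intro γ' hγ'
    have := ar_coeff_sub_zsmul R hδ.1 hγs 1 (by rwa [← h1eq]) γ' hγ'
    rwa [← h1eq] at this
  have hposs : δ - γ ∈ R.pos := by
    refine ⟨hroot, fun γ' hγ' => ?_⟩
    rw [hcoeffs γ' hγ']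
    by_cases h : γ' = γ
    · rw [if_pos h, h]; omega
    · rw [if_neg h]; simpa using hδ.2 γ' hγ'
  have hsupp2 : R.Supp (δ - γ) ⊆ K := by
    intro γ' hγ'
    rw [RootSystemData.Supp, Finset.mem_filter] at hγ'
    by_cases h : γ' = γ
    · rwa [h]
    · have := hcoeffs γ' hγ'.1
      rw [if_neg h] at this
      exact hs (Finset.mem_filter.mpr ⟨hγ'.1, by omega⟩)
  have hheight : R.height (δ - γ) = R.height δ - 1 := by
    unfold RootSystemData.height
    rw [Finset.sum_congr rfl hcoeffs, Finset.sum_sub_distrib,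
      Finset.sum_ite_eq' R.simples γ (fun _ => (1:ℤ))]
    simp [hγs]
  exact ⟨γ, hγK, hposs, hsupp2, hheight, by rwa [real_inner_comm]⟩

end AuxRoot5
section AuxRoot6

open Submodule Module
open scoped Classical

variable {V : Type} [NormedAddCommGroup V] [InnerProductSpace ℝ V]
variable (R : RootSystemData V) {K : Finset V} {N : ℝ}

/-- The set of ordered decompositions of `δ` into two positive roots, as a finset. -/
noncomputable def arDord (R : RootSystemData V) (δ : V) : Finset V :=
  R.finite.toFinset.filter fun β => β ∈ R.pos ∧ δ - β ∈ R.pos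

theorem ar_mem_Dord {δ β : V} :
    β ∈ arDord R δ ↔ β ∈ R.pos ∧ δ - β ∈ R.pos := by
  unfold arDord
  rw [Finset.mem_filter, Set.Finite.mem_toFinset]
  exact ⟨fun h => h.2, fun h => ⟨h.1.1, h⟩⟩

theorem ar_card_lower (hK : K ⊆ R.simples) (hN : 0 < N)
    (hnorm : ∀ δ ∈ R.roots, δ ∈ span ℝ (K : Set V) → ⟪δ, δ⟫_ℝ = N) :
    ∀ (n : ℕ) (δ : V), δ ∈ R.pos → R.Supp δ ⊆ K → R.height δ = (n : ℤ) →
      2 * (n - 1) ≤ (arDord R δ).card := by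
  intro n
  induction n with
  | zero => intro δ _ _ _; simp
  | succ k ih =>
    intro δ hδ hs hh
    by_cases hk : k = 0
    · subst hk; simp
    have hht : 2 ≤ R.height δ := by rw [hh]; exact_mod_cast (by omega : 2 ≤ k + 1)
    obtain ⟨γ, hγK, hβpos, hβsupp, hβht, hβinner⟩ := ar_descent R hK hN hnorm hδ hs hht
    set β := δ - γ with hβdef
    have hββ : β + γ = δ := by rw [hβdef]; abel
    have hγs : γ ∈ R.simples := hK hγK
    have hγr : γ ∈ R.roots := R.simples_mem γ hγs
    have hγspan : γ ∈ span ℝ (K : Set V) := Submodule.subset_span hγK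
    have hγγ : ⟪γ, γ⟫_ℝ = N := hnorm γ hγr hγspan
    have hγpos : γ ∈ R.pos := ar_simple_pos R hγs
    have hβspan : β ∈ span ℝ (K : Set V) := ar_mem_span R hβpos.1 hβsupp
    have hδspan : δ ∈ span ℝ (K : Set V) := ar_mem_span R hδ.1 hs
    have hγβ : ⟪γ, β⟫_ℝ = -(N / 2) :=
      ar_inner_of_add R hnorm hγr hγspan hβpos.1 hβspan (by rw [add_comm, hββ]; exact hδ.1)
    set f : V → V := fun x => x - (2 * ⟪γ, x⟫_ℝ / N) • γ with hfdef
    have hfapp : ∀ x, f x = x - (2 * ⟪γ, x⟫_ℝ / N) • γ := fun x => rfl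
    have hinner_f : ∀ x, ⟪γ, f x⟫_ℝ = -⟪γ, x⟫_ℝ := by
      intro x
      rw [hfapp]
      simp only [inner_sub_right, real_inner_smul_right, hγγ]
      field_simp
      ring
    have hff : ∀ x, f (f x) = x := by
      intro x
      rw [hfapp (f x), hinner_f, hfapp x]
      have harith : 2 * -⟪γ, x⟫_ℝ / N = -(2 * ⟪γ, x⟫_ℝ / N) := by ring
      rw [harith, neg_smul, sub_neg_eq_add, sub_add_cancel]
    have hfinj : Function.Injective f := fun a b h => by rw [← hff a, h, hff b]
    have hfγ : f γ = -γ := by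
      rw [hfapp, hγγ]
      rw [show 2 * N / N = (2:ℝ) by field_simp]
      rw [two_smul]
      abel
    have hfβ : f β = δ := by
      rw [hfapp, hγβ]
      rw [show 2 * -(N/2) / N = (-1:ℝ) by field_simp]
      rw [neg_one_smul, sub_neg_eq_add, add_comm, ← hββ]
      abel
    -- the image of decompositions of β under the reflection f
    have hmain : ∀ ε ∈ arDord R β, f ε ∈ arDord R δ ∧ f ε ≠ γ ∧ f ε ≠ β := by
      intro ε hε
      rw [ar_mem_Dord] at hε
      obtain ⟨hεpos, hβεpos⟩ := hε
      have hεsupp : R.Supp ε ⊆ K :=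
        (ar_supp_subset_of_add R hεpos hβεpos hβpos.1 (by abel)).trans hβsupp
      have hεspan : ε ∈ span ℝ (K : Set V) := ar_mem_span R hεpos.1 hεsupp
      have hεneγ : ε ≠ γ := by
        intro h
        subst h
        exact ar_no_string R hN hnorm hβpos.1 hβspan hεpos.1 hεspan hβεpos.1
          (hββ ▸ hδ.1)
      have hεnenegγ : ε ≠ -γ := by
        intro h
        rw [h] at hεpos
        exact ar_neg_simple_not_pos R hγs hεpos
      obtain ⟨m, hm⟩ : ∃ m : ℤ, ⟪γ, ε⟫_ℝ = m * N / 2 := by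
        rcases ar_inner_cases R hN hnorm hγr hγspan hεpos.1 hεspan hεneγ hεnenegγ
          with h | h | h
        · exact ⟨0, by rw [h]; norm_num⟩
        · exact ⟨1, by rw [h]; norm_num⟩
        · exact ⟨-1, by rw [h]; push_cast; ring⟩
      have hfε : f ε = ε - (m : ℝ) • γ := by
        rw [hfapp, hm]
        rw [show 2 * ((m:ℝ) * N / 2) / N = (m:ℝ) by field_simp]
      obtain ⟨hfεpos, hfεsupp, -⟩ :=
        ar_reflect_pos R hK hN hnorm hγK hεpos hεsupp hεneγ hm
      rw [← hfε] at hfεpos hfεsupp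
      -- now the complementary piece
      have hβεsupp : R.Supp (β - ε) ⊆ K :=
        (ar_supp_subset_of_add R hβεpos hεpos hβpos.1 (by abel)).trans hβsupp
      have hβεspan : β - ε ∈ span ℝ (K : Set V) := ar_mem_span R hβεpos.1 hβεsupp
      have hβεneγ : β - ε ≠ γ := by
        intro h
        have hεeq : β - γ = ε := by rw [← h]; abel
        exact ar_no_string R hN hnorm hβpos.1 hβspan hγr hγspan (hεeq ▸ hεpos.1)
          (hββ ▸ hδ.1)
      have hβεnenegγ : β - ε ≠ -γ := by
        intro h
        rw [h] at hβεpos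
        exact ar_neg_simple_not_pos R hγs hβεpos
      obtain ⟨m', hm'⟩ : ∃ m' : ℤ, ⟪γ, β - ε⟫_ℝ = m' * N / 2 := by
        rcases ar_inner_cases R hN hnorm hγr hγspan hβεpos.1 hβεspan hβεneγ hβεnenegγ
          with h | h | h
        · exact ⟨0, by rw [h]; norm_num⟩
        · exact ⟨1, by rw [h]; norm_num⟩
        · exact ⟨-1, by rw [h]; push_cast; ring⟩
      obtain ⟨hfβεpos, -, -⟩ :=
        ar_reflect_pos R hK hN hnorm hγK hβεpos hβεsupp hβεneγ hm'
      have hδfε : δ - f ε = β - ε - (2 * ⟪γ, β - ε⟫_ℝ / N) • γ := by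
        rw [hfapp]
        conv_rhs => rw [inner_sub_right]
        rw [hγβ, ← hββ]
        have hNne : N ≠ 0 := ne_of_gt hN
        rw [show 2 * (-(N/2) - ⟪γ, ε⟫_ℝ) / N = -1 - 2 * ⟪γ, ε⟫_ℝ / N by field_simp]
        rw [sub_smul, neg_one_smul]
        abel
      have hδfεpos : δ - f ε ∈ R.pos := by
        rw [hδfε]
        have := hfβεpos
        rwa [show β - ε - (↑m' : ℝ) • γ = β - ε - (2 * ⟪γ, β - ε⟫_ℝ / N) • γ by
          rw [hm', show 2 * ((m':ℝ) * N / 2) / N = (m':ℝ) by field_simp]] at this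
      refine ⟨ar_mem_Dord R |>.mpr ⟨hfεpos, hδfεpos⟩, ?_, ?_⟩
      · intro h
        have : ε = -γ := by rw [← hff ε, h, hfγ]
        exact hεnenegγ this
      · intro h
        have hεδ : ε = δ := by rw [← hff ε, h, hfβ]
        rw [hεδ] at hβεpos
        have : β - δ = -γ := by rw [← hββ]; abel
        rw [this] at hβεpos
        exact ar_neg_simple_not_pos R hγs hβεpos
    -- assemble cardinalities
    have hγmem : γ ∈ arDord R δ := (ar_mem_Dord R).mpr ⟨hγpos, hβpos⟩
    have hβmem : β ∈ arDord R δ := (ar_mem_Dord R).mpr ⟨hβpos, by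
      rw [show δ - β = γ by rw [← hββ]; abel]; exact hγpos⟩
    have hγβne : γ ≠ β := by
      intro h
      have : δ = (2:ℝ) • γ := by rw [← hββ, ← h, two_smul]
      exact R.reduced γ hγr (this ▸ hδ.1)
    have hsubset : insert γ (insert β ((arDord R β).image f)) ⊆ arDord R δ := by
      intro x hx
      rcases Finset.mem_insert.mp hx with rfl | hx
      · exact hγmem
      rcases Finset.mem_insert.mp hx with rfl | hx
      · exact hβmem
      obtain ⟨ε, hε, rfl⟩ := Finset.mem_image.mp hx
      exact (hmain ε hε).1
    have hγnotin : γ ∉ insert β ((arDord R β).image f) := by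
      rw [Finset.mem_insert]
      rintro (h | h)
      · exact hγβne h
      obtain ⟨ε, hε, hfe⟩ := Finset.mem_image.mp h
      exact (hmain ε hε).2.1 hfe
    have hβnotin : β ∉ (arDord R β).image f := by
      intro h
      obtain ⟨ε, hε, hfe⟩ := Finset.mem_image.mp h
      exact (hmain ε hε).2.2 hfe
    have hcard1 : (insert γ (insert β ((arDord R β).image f))).card =
        2 + (arDord R β).card := by
      rw [Finset.card_insert_of_notMem hγnotin, Finset.card_insert_of_notMem hβnotin,
        Finset.card_image_of_injective _ hfinj]
      omega
    have hle := Finset.card_le_card hsubset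
    rw [hcard1] at hle
    have hih : 2 * (k - 1) ≤ (arDord R β).card := by
      refine ih β hβpos hβsupp ?_
      rw [hβht, hh]
      push_cast
      omega
    omega

end AuxRoot6
section AuxLie

open Submodule Module
open scoped Classical

variable {V : Type} [NormedAddCommGroup V] [InnerProductSpace ℝ V]
  {W : Type} [AddCommGroup W] [Module ℝ W]
  {L : Type} [LieRing L] [LieAlgebra ℂ L] [FiniteDimensional ℂ L]
  (S : SphericalSetup V W L)

theorem sp_g_le_uSp {δ : V} (hδ : δ ∈ S.pos) : S.g δ ≤ S.uSp (S.τ δ) := by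
  unfold SphericalSetup.uSp
  exact le_biSup _ (by exact ⟨hδ, rfl⟩)

/-- If a nonzero element of the (one-dimensional) root space lies in a submodule, the
whole root space does. -/
theorem sp_g_le_of_mem {δ : V} (hδ : δ ∈ S.pos) {v : L} (hv : v ∈ S.g δ) (hv0 : v ≠ 0)
    {M : Submodule ℂ L} (hM : v ∈ M) : S.g δ ≤ M := by
  have h1 : Submodule.span ℂ {v} ≤ S.g δ := by
    rw [Submodule.span_le, Set.singleton_subset_iff]; exact hv
  have h2 : Submodule.span ℂ {v} = S.g δ := by
    apply Submodule.eq_of_le_of_finrank_le h1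
    rw [S.g_dim δ hδ, finrank_span_singleton hv0]
  rw [← h2, Submodule.span_le, Set.singleton_subset_iff]
  exact hM

theorem sp_c_eq_one (hS : S.Spherical) {δ : V} (hδ : δ ∈ S.pos)
    (hact : ¬ S.g δ ≤ S.n) : S.c (S.τ δ) = 1 := by
  set w := S.τ δ
  have hne : S.n ⊓ S.uSp w ≠ S.uSp w := by
    intro h
    have : S.uSp w ≤ S.n := by rw [← h]; exact inf_le_left
    exact hact ((sp_g_le_uSp S hδ).trans this)
  have hlt : S.n ⊓ S.uSp w < S.uSp w := lt_of_le_of_ne inf_le_right hne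
  have h1 : finrank ℂ ↥(S.n ⊓ S.uSp w) < finrank ℂ ↥(S.uSp w) :=
    Submodule.finrank_lt_finrank_of_lt hlt
  have h2 := hS.1 w
  unfold SphericalSetup.c at h2 ⊢
  omega

theorem sp_c_finrank (hS : S.Spherical) {δ : V} (hδ : δ ∈ S.pos)
    (hact : ¬ S.g δ ≤ S.n) :
    finrank ℂ ↥(S.uSp (S.τ δ)) = finrank ℂ ↥(S.n ⊓ S.uSp (S.τ δ)) + 1 := by
  have h1 := sp_c_eq_one S hS hδ hact
  have h2 : finrank ℂ ↥(S.n ⊓ S.uSp (S.τ δ)) ≤ finrank ℂ ↥(S.uSp (S.τ δ)) :=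
    Submodule.finrank_mono inf_le_right
  unfold SphericalSetup.c at h1
  omega

/-- In a decomposition `β + γ = α` of positive roots, not both summands can have their
root spaces inside `𝔫` when `α` is active. -/
theorem sp_at_least_one {α β γ : V} (hα : α ∈ S.pos) (hact : ¬ S.g α ≤ S.n)
    (hβ : β ∈ S.pos) (hγ : γ ∈ S.pos) (hsum : β + γ = α)
    (h1 : S.g β ≤ S.n) (h2 : S.g γ ≤ S.n) : False := by
  obtain ⟨x, hx, y, hy, hne⟩ := S.bracket_ne β hβ γ hγ (by rwa [hsum])
  have hmem : ⁅x, y⁆ ∈ S.g α := by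
    have := S.bracket_mem β γ x hx y hy
    rwa [hsum] at this
  have hn : ⁅x, y⁆ ∈ S.n := S.n_bracket x (h1 hx) y (h2 hy)
  exact hact (sp_g_le_of_mem S hα hmem hne hn)

/-- In a decomposition `β + γ = α` of positive roots with `α` active, at most one of
`β`, `γ` can be active. -/
theorem sp_at_most_one (hS : S.Spherical) {α β γ : V} (hα : α ∈ S.pos)
    (hacta : ¬ S.g α ≤ S.n) (hβ : β ∈ S.pos) (hγ : γ ∈ S.pos) (hsum : β + γ = α)
    (hactb : ¬ S.g β ≤ S.n) (hactc : ¬ S.g γ ≤ S.n) : False := by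
  have hca := sp_c_eq_one S hS hα hacta
  have hcb := sp_c_eq_one S hS hβ hactb
  have hcc := sp_c_eq_one S hS hγ hactc
  set I := {w : W // S.c w = 1}
  have hli : LinearIndependent ℝ (fun w : I => (w : W)) := hS.2
  have hne0 : ∀ x : I, (x : W) ≠ 0 := fun x => hli.ne_zero x
  set a : I := ⟨S.τ α, hca⟩
  set b : I := ⟨S.τ β, hcb⟩
  set c : I := ⟨S.τ γ, hcc⟩
  have habc : (a : W) = (b : W) + (c : W) := by
    show S.τ α = S.τ β + S.τ γ
    rw [← hsum, map_add]
  have hli' := linearIndependent_iff'.mp hli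
  by_cases hbc : b = c
  · -- a = 2 b
    have h2b : (a : W) = (2 : ℝ) • (b : W) := by rw [habc, ← hbc, two_smul]
    by_cases hab : a = b
    · rw [hab] at h2b
      have : (b : W) = 0 := by
        have := h2b
        nth_rewrite 1 [← one_smul ℝ (b : W)] at this
        have h3 : ((1 : ℝ) - 2) • (b : W) = 0 := by rw [sub_smul, this]; abel
        have h4 : ((1 : ℝ) - 2) ≠ 0 := by norm_num
        exact (smul_eq_zero.mp h3).resolve_left h4
      exact hne0 b this
    · have := hli' {a, b} (fun x => if x = a then (1 : ℝ) else -2) ?_ a (by simp)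
      · simp at this
      · rw [Finset.sum_insert (by simpa using hab), Finset.sum_singleton]
        beta_reduce
        rw [if_pos rfl, if_neg (Ne.symm hab)]
        rw [one_smul, h2b]
        module
  · by_cases hab : a = b
    · rw [hab] at habc
      have : (c : W) = 0 := by
        have h3 := habc
        nth_rewrite 1 [← add_zero ((b : W))] at h3
        exact (add_left_cancel h3).symm
      exact hne0 c this
    by_cases hac : a = c
    · rw [hac] at habc
      have : (b : W) = 0 := by
        have h3 := habc
        rw [add_comm] at h3
        nth_rewrite 1 [← add_zero ((c : W))] at h3
        exact (add_left_cancel h3).symm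
      exact hne0 b this
    · have := hli' {a, b, c} (fun x => if x = a then (1 : ℝ) else -1) ?_ a (by simp)
      · simp at this
      · rw [Finset.sum_insert (by simp [hab, hac]),
          Finset.sum_insert (by simpa using hbc), Finset.sum_singleton]
        beta_reduce
        rw [if_pos rfl, if_neg (Ne.symm hab), if_neg (Ne.symm hac)]
        rw [one_smul, habc]
        module

end AuxLie
section AuxInj

open Submodule Module
open scoped Classical

variable {V : Type} [NormedAddCommGroup V] [InnerProductSpace ℝ V]

theorem ar_ne_neg (R : RootSystemData V) {β β' : V} (hβ : β ∈ R.pos)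
    (hβ' : β' ∈ R.pos) : β' ≠ -β := by
  intro h
  have hrepr : β' = ∑ γ' ∈ R.simples, (-R.coeff β γ') • γ' := by
    rw [h]
    conv_lhs => rw [R.coeff_spec β hβ.1]
    rw [← Finset.sum_neg_distrib]
    exact Finset.sum_congr rfl fun γ' _ => by rw [neg_smul]
  have hco := ar_coeff_ext R hβ'.1 hrepr
  have hzero : ∀ γ' ∈ R.simples, R.coeff β γ' = 0 := by
    intro γ' hγ'
    have h1 := hβ'.2 γ' hγ'
    have h2 := hβ.2 γ' hγ'
    have h3 := hco γ' hγ'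
    omega
  have : β = 0 := by
    rw [R.coeff_spec β hβ.1]
    exact Finset.sum_eq_zero fun γ' hγ' => by rw [hzero γ' hγ', zero_smul]
  exact R.ne_zero β hβ.1 this

variable {W : Type} [AddCommGroup W] [Module ℝ W]
  {L : Type} [LieRing L] [LieAlgebra ℂ L] [FiniteDimensional ℂ L]
  (S : SphericalSetup V W L)

theorem sp_tau_inj (hS : S.Spherical) {K : Finset V} {N : ℝ} (hK : K ⊆ S.simples)
    (hN : 0 < N)
    (hnorm : ∀ δ ∈ S.roots, δ ∈ span ℝ (K : Set V) → ⟪δ, δ⟫_ℝ = N)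
    {α β β' : V} (hα : α ∈ S.pos) (hacta : ¬ S.g α ≤ S.n) (hsα : S.Supp α ⊆ K)
    (hβ : β ∈ S.pos) (hactb : ¬ S.g β ≤ S.n) (hαβ : α - β ∈ S.pos)
    (hβ' : β' ∈ S.pos) (hactb' : ¬ S.g β' ≤ S.n)
    (hβ'cases : α - β' ∈ S.pos ∨ β' = α)
    (hττ : S.τ β = S.τ β') (hne : β ≠ β') : False := by
  set R := S.toRootSystemData with hR
  -- supports and spans
  have hsumβ : β + (α - β) = α := by abel
  have hsupβ : R.Supp β ⊆ K := (ar_supp_subset_of_add R hβ hαβ hα.1 hsumβ).trans hsα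
  have hsupγ : R.Supp (α - β) ⊆ K :=
    (ar_supp_subset_of_add R hαβ hβ hα.1 (by abel)).trans hsα
  have hsupβ' : R.Supp β' ⊆ K := by
    rcases hβ'cases with h | h
    · exact (ar_supp_subset_of_add R hβ' h hα.1 (by abel)).trans hsα
    · rw [h]; exact hsα
  have hαspan : α ∈ span ℝ (K : Set V) := ar_mem_span R hα.1 hsα
  have hβspan : β ∈ span ℝ (K : Set V) := ar_mem_span R hβ.1 hsupβ
  have hβ'span : β' ∈ span ℝ (K : Set V) := ar_mem_span R hβ'.1 hsupβ'
  -- inner products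
  have hiαβ : ⟪α, β⟫_ℝ = N / 2 :=
    ar_inner_of_sub R hnorm hα.1 hαspan hβ.1 hβspan hαβ.1
  have hexp : ⟪α - β + β', α - β + β'⟫_ℝ =
      ⟪α, α⟫_ℝ + ⟪β, β⟫_ℝ + ⟪β', β'⟫_ℝ - 2 * ⟪α, β⟫_ℝ + 2 * ⟪α, β'⟫_ℝ
        - 2 * ⟪β, β'⟫_ℝ := by
    simp only [inner_sub_left, inner_sub_right, inner_add_left, inner_add_right]
    rw [real_inner_comm β α, real_inner_comm β' α, real_inner_comm β' β]
    ring
  have hμbig : 2 * N ≤ ⟪α - β + β', α - β + β'⟫_ℝ := by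
    rw [hexp, hnorm α hα.1 hαspan, hnorm β hβ.1 hβspan, hnorm β' hβ'.1 hβ'span, hiαβ]
    rcases hβ'cases with h | h
    · have hiαβ' : ⟪α, β'⟫_ℝ = N / 2 :=
        ar_inner_of_sub R hnorm hα.1 hαspan hβ'.1 hβ'span h.1
      have ht : ⟪β, β'⟫_ℝ ≤ N / 2 := by
        rcases ar_inner_cases R hN hnorm hβ.1 hβspan hβ'.1 hβ'span (Ne.symm hne)
          (ar_ne_neg R hβ hβ') with h' | h' | h' <;> rw [h'] <;> linarith only [hN]
      rw [hiαβ']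
      linarith only [hN, ht]
    · subst h
      have h1 : ⟪β, β'⟫_ℝ = N / 2 := (real_inner_comm β' β).trans hiαβ
      rw [h1, hnorm β' hβ'.1 hβ'span]
      linarith only [hN]
  -- μ is not a root
  have hμspan : α - β + β' ∈ span ℝ (K : Set V) :=
    Submodule.add_mem _ (Submodule.sub_mem _ hαspan hβspan) hβ'span
  have hμroot : α - β + β' ∉ S.roots := by
    intro h
    have := hnorm _ h hμspan
    linarith only [hN, hμbig, this]
  have hgμ : S.g (α - β + β') = ⊥ := S.g_bot _ (fun hp => hμroot hp.1)
  have hβ'γeq : β' + (α - β) = α - β + β' := by abel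
  -- the root space of `α - β` lies in `𝔫`
  have hγn : S.g (α - β) ≤ S.n := by
    by_contra hc
    exact sp_at_most_one S hS hα hacta hβ hαβ hsumβ hactb hc
  obtain ⟨x₀, hx₀, z, hz, hne0⟩ :=
    S.bracket_ne β hβ (α - β) hαβ (by rw [hsumβ]; exact hα)
  by_cases hgg : S.g β = S.g β'
  · have hmem : ⁅x₀, z⁆ ∈ S.g (β' + (α - β)) :=
      S.bracket_mem β' (α - β) x₀ (hgg ▸ hx₀) z hz
    rw [hβ'γeq, hgμ, Submodule.mem_bot] at hmem
    exact hne0 hmem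
  · have hr1 : finrank ℂ (S.g β) = 1 := S.g_dim β hβ
    have hr1' : finrank ℂ (S.g β') = 1 := S.g_dim β' hβ'
    have hinf : finrank ℂ ↥(S.g β ⊓ S.g β') = 0 := by
      by_contra h
      have h1 : 1 ≤ finrank ℂ ↥(S.g β ⊓ S.g β') := by omega
      have h2 : S.g β ⊓ S.g β' = S.g β :=
        Submodule.eq_of_le_of_finrank_le inf_le_left (by omega)
      have h3 : S.g β ≤ S.g β' := by rw [← h2]; exact inf_le_right
      exact hgg (Submodule.eq_of_le_of_finrank_le h3 (by omega))
    have hsup2 : finrank ℂ ↥(S.g β ⊔ S.g β') = 2 := by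
      have := Submodule.finrank_sup_add_finrank_inf_eq (S.g β) (S.g β')
      rw [hinf, hr1, hr1'] at this
      omega
    set u := S.uSp (S.τ β) with hu
    have hAu : S.g β ⊔ S.g β' ≤ u :=
      sup_le (sp_g_le_uSp S hβ) (by rw [hu, hττ]; exact sp_g_le_uSp S hβ')
    have hfr : finrank ℂ ↥u = finrank ℂ ↥(S.n ⊓ u) + 1 := sp_c_finrank S hS hβ hactb
    have h6 := Submodule.finrank_sup_add_finrank_inf_eq (S.g β ⊔ S.g β') (S.n ⊓ u)
    have h7 : finrank ℂ ↥((S.g β ⊔ S.g β') ⊔ (S.n ⊓ u)) ≤ finrank ℂ ↥u :=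
      Submodule.finrank_mono (sup_le hAu inf_le_right)
    have h5 : 1 ≤ finrank ℂ ↥((S.g β ⊔ S.g β') ⊓ (S.n ⊓ u)) := by omega
    have hnebot : (S.g β ⊔ S.g β') ⊓ (S.n ⊓ u) ≠ ⊥ := by
      intro h
      rw [h, finrank_bot] at h5
      omega
    obtain ⟨ξ, hξ, hξ0⟩ := Submodule.exists_mem_ne_zero_of_ne_bot hnebot
    have hξA : ξ ∈ S.g β ⊔ S.g β' := (Submodule.mem_inf.mp hξ).1
    have hξn : ξ ∈ S.n := (Submodule.mem_inf.mp (Submodule.mem_inf.mp hξ).2).1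
    obtain ⟨x, hx, y, hy, hxy⟩ := Submodule.mem_sup.mp hξA
    have hx0 : x ≠ 0 := by
      intro h
      rw [h, zero_add] at hxy
      rw [hxy] at hy
      exact hactb' (sp_g_le_of_mem S hβ' hy hξ0 hξn)
    have hy0 : y ≠ 0 := by
      intro h
      rw [h, add_zero] at hxy
      rw [hxy] at hx
      exact hactb (sp_g_le_of_mem S hβ hx hξ0 hξn)
    have hspanx : Submodule.span ℂ {x} = S.g β := by
      apply Submodule.eq_of_le_of_finrank_le
      · rw [Submodule.span_le, Set.singleton_subset_iff]; exact hx
      · rw [hr1, finrank_span_singleton hx0]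
    obtain ⟨c, hc⟩ : ∃ c : ℂ, c • x = x₀ := by
      rw [← hspanx] at hx₀
      exact Submodule.mem_span_singleton.mp hx₀
    have hxz : ⁅x, z⁆ ≠ 0 := by
      intro h
      apply hne0
      rw [← hc, smul_lie, h, smul_zero]
    have hyz : ⁅y, z⁆ = 0 := by
      have := S.bracket_mem β' (α - β) y hy z hz
      rw [hβ'γeq, hgμ, Submodule.mem_bot] at this
      exact this
    have hξz : ⁅ξ, z⁆ ∈ S.n := S.n_bracket ξ hξn z (hγn hz)
    have hsum2 : ⁅ξ, z⁆ = ⁅x, z⁆ := by rw [← hxy, add_lie, hyz, add_zero]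
    have hmem : ⁅x, z⁆ ∈ S.g α := by
      have := S.bracket_mem β (α - β) x hx z hz
      rwa [hsumβ] at this
    exact hacta (sp_g_le_of_mem S hα hmem hxz (hsum2 ▸ hξz))

end AuxInj
section AuxUB

open Submodule Module
open scoped Classical

variable {V : Type} [NormedAddCommGroup V] [InnerProductSpace ℝ V]
  {W : Type} [AddCommGroup W] [Module ℝ W]
  {L : Type} [LieRing L] [LieAlgebra ℂ L] [FiniteDimensional ℂ L]
  (S : SphericalSetup V W L)

theorem sp_indep_card (hS : S.Spherical) (K : Finset V) (F : Finset W)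
    (hF1 : ∀ w ∈ F, S.c w = 1)
    (hF2 : ∀ w ∈ F, w ∈ Submodule.map S.τ (span ℝ (K : Set V))) :
    F.card ≤ K.card := by
  set W₀ := Submodule.map S.τ (span ℝ (K : Set V)) with hW₀
  haveI : Module.Finite ℝ ↥(span ℝ (K : Set V)) := FiniteDimensional.span_finset ℝ K
  haveI : Module.Finite ℝ ↥W₀ := Module.Finite.map _ _
  have hli0 : LinearIndependent ℝ (fun x : F => (x : W)) := by
    refine hS.2.comp (fun x : F => (⟨(x : W), hF1 _ x.2⟩ : {w // S.c w = 1})) ?_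
    intro a b h
    simp only [Subtype.mk.injEq] at h
    exact Subtype.ext h
  have hv : LinearIndependent ℝ (fun x : F => (⟨(x : W), hF2 _ x.2⟩ : W₀)) := by
    apply LinearIndependent.of_comp (W₀.subtype)
    exact hli0
  have h1 : Fintype.card F ≤ finrank ℝ ↥W₀ := hv.fintype_card_le_finrank
  have h2 : finrank ℝ ↥W₀ ≤ finrank ℝ ↥(span ℝ (K : Set V)) :=
    Submodule.finrank_map_le S.τ (span ℝ (K : Set V))
  have h3 : finrank ℝ ↥(span ℝ (K : Set V)) ≤ K.card := finrank_span_finset_le_card K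
  rw [Fintype.card_coe] at h1
  omega

theorem sp_card_upper (hS : S.Spherical) {K : Finset V} {N : ℝ} (hK : K ⊆ S.simples)
    (hN : 0 < N)
    (hnorm : ∀ δ ∈ S.roots, δ ∈ span ℝ (K : Set V) → ⟪δ, δ⟫_ℝ = N)
    {α : V} (hα : α ∈ S.pos) (hact : ¬ S.g α ≤ S.n) (hsα : S.Supp α ⊆ K) :
    (arDord S.toRootSystemData α).card ≤ 2 * (K.card - 1) := by
  set R := S.toRootSystemData with hR
  set D := arDord R α with hD
  set D1 := D.filter (fun β => ¬ S.g β ≤ S.n) with hD1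
  set D2 := D.filter (fun β => S.g β ≤ S.n) with hD2
  have hsplit : D2.card + D1.card = D.card :=
    Finset.card_filter_add_card_filter_not (fun β => S.g β ≤ S.n)
  -- each member of a decomposition pair supported in K
  have hmemD : ∀ β ∈ D, β ∈ R.pos ∧ α - β ∈ R.pos := fun β hβ => (ar_mem_Dord R).mp hβ
  have hsupp : ∀ β ∈ D, R.Supp β ⊆ K := by
    intro β hβ
    obtain ⟨h1, h2⟩ := hmemD β hβ
    exact (ar_supp_subset_of_add R h1 h2 hα.1 (by abel)).trans hsα
  -- inactive part injects into active part
  have hD2toD1 : ∀ β ∈ D2, α - β ∈ D1 := by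
    intro β hβ
    rw [hD2, Finset.mem_filter] at hβ
    obtain ⟨hβD, hβn⟩ := hβ
    obtain ⟨hβpos, hαβpos⟩ := hmemD β hβD
    have hmem : α - β ∈ D := (ar_mem_Dord R).mpr ⟨hαβpos, by
      rw [show α - (α - β) = β by abel]; exact hβpos⟩
    rw [hD1, Finset.mem_filter]
    refine ⟨hmem, ?_⟩
    intro h
    exact sp_at_least_one S hα hact hβpos hαβpos (by abel) hβn h
  have hcard2 : D2.card ≤ D1.card :=
    Finset.card_le_card_of_injOn (fun β => α - β) hD2toD1
      (fun a _ b _ h => by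
        have : α - a = α - b := h
        have h2 : a = b := by
          have := congrArg (fun x => α - x) this.symm
          simpa using this.symm
        exact h2)
  -- τ is injective on the active part
  have hD1facts : ∀ β ∈ D1, β ∈ R.pos ∧ ¬ S.g β ≤ S.n ∧ α - β ∈ R.pos := by
    intro β hβ
    rw [hD1, Finset.mem_filter] at hβ
    exact ⟨(hmemD β hβ.1).1, hβ.2, (hmemD β hβ.1).2⟩
  have hτinj : Set.InjOn S.τ ↑D1 := by
    intro a ha b hb h
    by_contra hne
    obtain ⟨ha1, ha2, ha3⟩ := hD1facts a (by exact_mod_cast ha)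
    obtain ⟨hb1, hb2, hb3⟩ := hD1facts b (by exact_mod_cast hb)
    exact sp_tau_inj S hS hK hN hnorm hα hact hsα ha1 ha2 ha3 hb1 hb2
      (Or.inl hb3) h hne
  have himg : (D1.image S.τ).card = D1.card := Finset.card_image_of_injOn hτinj
  have hne0 : S.τ α ∉ D1.image S.τ := by
    intro h
    obtain ⟨β, hβ, hτ⟩ := Finset.mem_image.mp h
    obtain ⟨hb1, hb2, hb3⟩ := hD1facts β hβ
    have hβneα : β ≠ α := by
      intro h'
      rw [h'] at hb3
      rw [sub_self] at hb3
      exact R.ne_zero 0 hb3.1 rfl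
    exact sp_tau_inj S hS hK hN hnorm hα hact hsα hb1 hb2 hb3 hα hact
      (Or.inr rfl) hτ hβneα
  have hcardF : (insert (S.τ α) (D1.image S.τ)).card = D1.card + 1 := by
    rw [Finset.card_insert_of_notMem hne0, himg]
  have hF1 : ∀ w ∈ insert (S.τ α) (D1.image S.τ), S.c w = 1 := by
    intro w hw
    rcases Finset.mem_insert.mp hw with rfl | hw
    · exact sp_c_eq_one S hS hα hact
    · obtain ⟨β, hβ, rfl⟩ := Finset.mem_image.mp hw
      obtain ⟨hb1, hb2, -⟩ := hD1facts β hβ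
      exact sp_c_eq_one S hS hb1 hb2
  have hF2 : ∀ w ∈ insert (S.τ α) (D1.image S.τ),
      w ∈ Submodule.map S.τ (span ℝ (K : Set V)) := by
    intro w hw
    rcases Finset.mem_insert.mp hw with rfl | hw
    · exact ⟨α, ar_mem_span R hα.1 hsα, rfl⟩
    · obtain ⟨β, hβ, rfl⟩ := Finset.mem_image.mp hw
      rw [hD1, Finset.mem_filter] at hβ
      exact ⟨β, ar_mem_span R (hmemD β hβ.1).1.1 (hsupp β hβ.1), rfl⟩
  have hkey := sp_indep_card S hS K _ hF1 hF2
  rw [hcardF] at hkey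
  omega

end AuxUB
/-- Let `H` be a connected solvable spherical subgroup of `G` standardly embedded in `B`
and `α` an active root.  If the root subsystem `Δ(α) = Δ ∩ ⟨Supp α⟩` is of type `A`, `D`
or `E` (i.e. all its roots have the same length), then `α` is the sum of all simple roots
in its support, each with coefficient one. -/
theorem active_root_eq_sum_supp_of_simplyLaced
    {V : Type} [NormedAddCommGroup V] [InnerProductSpace ℝ V]
    {W : Type} [AddCommGroup W] [Module ℝ W]
    {L : Type} [LieRing L] [LieAlgebra ℂ L] [FiniteDimensional ℂ L]
    (S : SphericalSetup V W L) (hS : S.Spherical)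
    {α : V} (hα : α ∈ S.active)
    (hADE : ∀ β ∈ S.roots, β ∈ Submodule.span ℝ ((S.Supp α : Set V)) →
      ∀ γ ∈ S.roots, γ ∈ Submodule.span ℝ ((S.Supp α : Set V)) → ‖β‖ = ‖γ‖) :
    α = ∑ γ ∈ S.Supp α, γ := by
  classical
  have hαpos : α ∈ S.pos := hα.1
  have hαact : ¬ S.g α ≤ S.n := hα.2
  set K := S.Supp α with hKdef
  have hK : K ⊆ S.simples := Finset.filter_subset _ _
  have hsα : S.Supp α ⊆ K := le_refl _
  set N := ⟪α, α⟫_ℝ with hNdef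
  have hα0 : α ≠ 0 := S.ne_zero α hαpos.1
  have hN : 0 < N := by
    rw [hNdef, real_inner_self_eq_norm_sq]
    exact pow_pos (norm_pos_iff.mpr hα0) 2
  have hαspan : α ∈ Submodule.span ℝ (K : Set V) := ar_mem_span S.toRootSystemData hαpos.1 hsα
  have hnorm : ∀ δ ∈ S.roots, δ ∈ Submodule.span ℝ (K : Set V) → ⟪δ, δ⟫_ℝ = N := by
    intro δ hδ hδK
    have h1 : ‖δ‖ = ‖α‖ := hADE δ hδ hδK α hαpos.1 hαspan
    rw [real_inner_self_eq_norm_sq, h1, hNdef, real_inner_self_eq_norm_sq]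
  have hht1 : 1 ≤ S.height α := ar_height_pos S.toRootSystemData hαpos
  obtain ⟨n₀, hhn⟩ : ∃ n : ℕ, S.height α = (n : ℤ) :=
    ⟨(S.height α).toNat, (Int.toNat_of_nonneg (by omega)).symm⟩
  have hLB := ar_card_lower S.toRootSystemData hK hN hnorm n₀ α hαpos hsα hhn
  have hUB := sp_card_upper S hS hK hN hnorm hαpos hαact hsα
  have hcoeffK : ∀ γ ∈ K, 1 ≤ S.coeff α γ := by
    intro γ hγ
    have h1 := Finset.mem_filter.mp hγ
    have h2 := hαpos.2 γ h1.1
    have h3 := h1.2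
    omega
  have hzero : ∀ γ ∈ S.simples, γ ∉ K → S.coeff α γ = 0 := by
    intro γ hγ hn
    by_contra h
    exact hn (Finset.mem_filter.mpr ⟨hγ, h⟩)
  have hsumK : S.height α = ∑ γ ∈ K, S.coeff α γ :=
    (Finset.sum_subset hK hzero).symm
  have hge : (K.card : ℤ) ≤ S.height α := by
    rw [hsumK]
    calc (K.card : ℤ) = ∑ _γ ∈ K, (1 : ℤ) := by simp
    _ ≤ ∑ γ ∈ K, S.coeff α γ := Finset.sum_le_sum hcoeffK
  have hKcard1 : 1 ≤ K.card := by
    obtain ⟨γ, hγ, h⟩ := ar_pos_exists_coeff_pos S.toRootSystemData hαpos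
    exact Finset.card_pos.mpr ⟨γ, Finset.mem_filter.mpr ⟨hγ, by omega⟩⟩
  have hn₀1 : 1 ≤ n₀ := by
    have := hhn ▸ hht1
    exact_mod_cast this
  have hn₀K : n₀ ≤ K.card := by
    have h := le_trans hLB hUB
    omega
  have hle : S.height α ≤ (K.card : ℤ) := by
    rw [hhn]
    exact_mod_cast hn₀K
  have heq : S.height α = (K.card : ℤ) := le_antisymm hle hge
  have hexact : ∑ γ ∈ K, S.coeff α γ = ∑ _γ ∈ K, (1 : ℤ) := by
    rw [← hsumK, heq]
    simp
  have hone : ∀ γ ∈ K, S.coeff α γ = 1 := by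
    by_contra h
    push_neg at h
    obtain ⟨γ₀, hγ₀, hne⟩ := h
    have hlt : ∑ _γ ∈ K, (1 : ℤ) < ∑ γ ∈ K, S.coeff α γ :=
      Finset.sum_lt_sum hcoeffK ⟨γ₀, hγ₀,
        lt_of_le_of_ne (hcoeffK γ₀ hγ₀) (Ne.symm hne)⟩
    exact absurd hexact (ne_of_gt hlt)
  have hrepr : α = ∑ γ ∈ K, S.coeff α γ • γ :=
    (S.coeff_spec α hαpos.1).trans
      (Finset.sum_subset hK (fun x hx hnx => by rw [hzero x hx hnx, zero_smul])).symm
  rw [hrepr]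
  refine Finset.sum_congr rfl fun γ hγ => ?_
  rw [hone γ hγ, one_smul]
end

section
/- In the root system of type $B_n$ ($n \ge 2$), with simple roots $\alpha_1,\ldots,\alpha_n$ ($\alpha_n$ short), the positive roots $\alpha$ with full support satisfying $s(\alpha) = n - 1$, where $s(\alpha)$ is the number of unordered decompositions of $\alpha$ as a sum of two positive roots, are exactly $\alpha_1+\alpha_2+\cdots+\alpha_n$ and $\alpha_1+\alpha_2+\cdots+\alpha_{n-1}+2\alpha_n$. -/
/-- The positive roots of the root system of type `B n` (`n ≥ 2`), written in coordinates
with respect to the standard simple roots `α₁, …, αₙ` (`αₙ` short):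
* `e_i - e_j = α_i + ⋯ + α_{j-1}` and `e_i = α_i + ⋯ + α_n`, i.e. the indicator of an
  interval `[i, j]`;
* `e_i + e_j = α_i + ⋯ + α_{j-1} + 2α_j + ⋯ + 2α_n` (`i < j`), i.e. `1` on `[i, j-1]`
  and `2` on `[j, n]`. -/
def typeBPos (n : ℕ) : Set (Fin n → ℤ) :=
  {v | (∃ i j : Fin n, i ≤ j ∧ v = fun k => if i ≤ k ∧ k ≤ j then 1 else 0) ∨
       (∃ i j : Fin n, i < j ∧ v = fun k => if k < i then 0 else if k < j then 1 else 2)}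

/-- `s(α)`: the number of unordered representations of `α` as a sum of two positive roots
of `B n`. -/
noncomputable def typeBNumDecomp (n : ℕ) (α : Fin n → ℤ) : ℕ :=
  {z : Sym2 (Fin n → ℤ) | ∃ β ∈ typeBPos n, ∃ γ ∈ typeBPos n,
    z = Sym2.mk β γ ∧ β + γ = α}.ncard

/-- indicator of interval [a,b] (ℕ parameters). -/
def indN (n a b : ℕ) : Fin n → ℤ := fun k => if a ≤ (k : ℕ) ∧ (k : ℕ) ≤ b then 1 else 0

/-- 0 before a, 1 on [a,b), 2 from b on. -/
def t2N (n a b : ℕ) : Fin n → ℤ := fun k => if (k : ℕ) < a then 0 else if (k : ℕ) < b then 1 else 2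

lemma indN_apply {n : ℕ} (a b : ℕ) (k : Fin n) :
    indN n a b k = if a ≤ (k : ℕ) ∧ (k : ℕ) ≤ b then 1 else 0 := rfl

lemma indN_apply' {n : ℕ} (a b k : ℕ) (hk : k < n) :
    indN n a b ⟨k, hk⟩ = if a ≤ k ∧ k ≤ b then 1 else 0 := rfl

lemma t2N_apply {n : ℕ} (a b : ℕ) (k : Fin n) :
    t2N n a b k = if (k : ℕ) < a then 0 else if (k : ℕ) < b then 1 else 2 := rfl

lemma t2N_apply' {n : ℕ} (a b k : ℕ) (hk : k < n) :
    t2N n a b ⟨k, hk⟩ = if k < a then 0 else if k < b then 1 else 2 := rfl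

lemma mem_typeBPos_iff {n : ℕ} (v : Fin n → ℤ) :
    v ∈ typeBPos n ↔ (∃ a b : ℕ, a ≤ b ∧ b < n ∧ v = indN n a b) ∨
      (∃ a b : ℕ, a < b ∧ b < n ∧ v = t2N n a b) := by
  constructor
  · rintro (⟨i, j, hij, rfl⟩ | ⟨i, j, hij, rfl⟩)
    · exact Or.inl ⟨i, j, hij, j.isLt, by
        funext k; rw [indN_apply]; simp only [Fin.le_def]⟩
    · exact Or.inr ⟨i, j, hij, j.isLt, by
        funext k; rw [t2N_apply]; simp only [Fin.lt_def]⟩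
  · rintro (⟨a, b, hab, hb, rfl⟩ | ⟨a, b, hab, hb, rfl⟩)
    · refine Or.inl ⟨⟨a, lt_of_le_of_lt hab hb⟩, ⟨b, hb⟩, hab, ?_⟩
      funext k; rw [indN_apply]; simp only [Fin.le_def]
    · refine Or.inr ⟨⟨a, lt_trans hab hb⟩, ⟨b, hb⟩, hab, ?_⟩
      funext k; rw [t2N_apply]; simp only [Fin.lt_def]

lemma indN_mem {n a b : ℕ} (hab : a ≤ b) (hb : b < n) : indN n a b ∈ typeBPos n :=
  (mem_typeBPos_iff _).2 (Or.inl ⟨a, b, hab, hb, rfl⟩)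

lemma t2N_mem {n a b : ℕ} (hab : a < b) (hb : b < n) : t2N n a b ∈ typeBPos n :=
  (mem_typeBPos_iff _).2 (Or.inr ⟨a, b, hab, hb, rfl⟩)

lemma indN_inj {n a b c d : ℕ} (hab : a ≤ b) (hb : b < n) (hcd : c ≤ d) (hd : d < n)
    (h : indN n a b = indN n c d) : a = c ∧ b = d := by
  have h1 := congrFun h ⟨a, lt_of_le_of_lt hab hb⟩
  have h2 := congrFun h ⟨c, lt_of_le_of_lt hcd hd⟩
  have h3 := congrFun h ⟨b, hb⟩
  have h4 := congrFun h ⟨d, hd⟩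
  rw [indN_apply', indN_apply'] at h1 h2 h3 h4
  split_ifs at h1 h2 h3 h4 <;> omega

lemma t2N_inj {n a b c d : ℕ} (hab : a < b) (hb : b < n) (hcd : c < d) (hd : d < n)
    (h : t2N n a b = t2N n c d) : a = c ∧ b = d := by
  have e : ∀ k : ℕ, k < n → (if k < a then (0:ℤ) else if k < b then 1 else 2)
      = (if k < c then 0 else if k < d then 1 else 2) := by
    intro k hk
    have := congrFun h ⟨k, hk⟩
    rwa [t2N_apply', t2N_apply'] at this
  have hac : a = c := by
    rcases lt_trichotomy a c with H | H | H
    · have := e a (by omega); split_ifs at this <;> omega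
    · exact H
    · have := e c (by omega); split_ifs at this <;> omega
  have hbd : b = d := by
    rcases lt_trichotomy b d with H | H | H
    · have := e b (by omega); split_ifs at this <;> omega
    · exact H
    · have := e d (by omega); split_ifs at this <;> omega
  exact ⟨hac, hbd⟩

lemma indN_ne_t2N {n a b c d : ℕ} (hn : 0 < n) (hcd : c < d) (hd : d ≤ n - 1) :
    indN n a b ≠ t2N n c d := by
  intro h
  have h1 := congrFun h ⟨n - 1, by omega⟩
  rw [indN_apply', t2N_apply'] at h1
  split_ifs at h1 <;> omega
lemma sym2_eq_elim {α : Type*} {a b c d : α} (h : Sym2.mk a b = Sym2.mk c d) :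
    (a = c ∧ b = d) ∨ (a = d ∧ b = c) := by
  exact Sym2.eq_iff.1 h

/-- auxiliary completeness step for decompositions of the all-ones vector. -/
lemma ones_aux {n a b c d : ℕ} (hab : a ≤ b) (hb : b < n) (hcd : c ≤ d) (hd : d < n)
    (e : ∀ k : ℕ, k < n → (if a ≤ k ∧ k ≤ b then (1:ℤ) else 0)
      + (if c ≤ k ∧ k ≤ d then 1 else 0) = 1)
    (ha : a = 0) : b < n - 1 ∧ c = b + 1 ∧ d = n - 1 := by
  have hbn : b < n - 1 := by
    by_contra H
    have := e c (by omega)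
    split_ifs at this <;> omega
  have hc : c = b + 1 := by
    have h1 := e c (by omega)
    have h2 := e (b+1) (by omega)
    split_ifs at h1 h2 <;> omega
  have hdn : d = n - 1 := by
    have := e (n-1) (by omega)
    split_ifs at this <;> omega
  exact ⟨hbn, hc, hdn⟩

lemma decomp_ones {n : ℕ} (hn : 2 ≤ n) :
    {z : Sym2 (Fin n → ℤ) | ∃ β ∈ typeBPos n, ∃ γ ∈ typeBPos n,
      z = Sym2.mk β γ ∧ β + γ = (fun _ => 1)} =
    (fun m : ℕ => Sym2.mk (indN n 0 m) (indN n (m+1) (n-1))) '' ↑(Finset.range (n-1)) := by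
  ext z
  constructor
  · rintro ⟨β, hβ, γ, hγ, rfl, hsum⟩
    rw [mem_typeBPos_iff] at hβ hγ
    rcases hβ with ⟨a, b, hab, hb, rfl⟩ | ⟨a, b, hab, hb, rfl⟩
    · rcases hγ with ⟨c, d, hcd, hd, rfl⟩ | ⟨c, d, hcd, hd, rfl⟩
      · -- indN + indN
        have e : ∀ k : ℕ, k < n → (if a ≤ k ∧ k ≤ b then (1:ℤ) else 0)
            + (if c ≤ k ∧ k ≤ d then 1 else 0) = 1 := fun k hk => congrFun hsum ⟨k, hk⟩
        have h0 : a = 0 ∨ c = 0 := by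
          have := e 0 (by omega); split_ifs at this <;> omega
        rcases h0 with h0 | h0
        · obtain ⟨hb1, hc1, hd1⟩ := ones_aux hab hb hcd hd e h0
          subst h0 hc1 hd1
          exact ⟨b, by simp only [Finset.coe_range, Set.mem_Iio]; omega, rfl⟩
        · obtain ⟨hd1, ha1, hb1⟩ := ones_aux hcd hd hab hb
            (fun k hk => by have := e k hk; linarith) h0
          subst h0 ha1 hb1
          exact ⟨d, by simp only [Finset.coe_range, Set.mem_Iio]; omega, Sym2.eq_swap⟩
      · exfalso
        have e : ∀ k : ℕ, k < n → (if a ≤ k ∧ k ≤ b then (1:ℤ) else 0)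
            + (if k < c then 0 else if k < d then 1 else 2) = 1 :=
          fun k hk => congrFun hsum ⟨k, hk⟩
        have := e (n-1) (by omega); split_ifs at this <;> omega
    · rcases hγ with ⟨c, d, hcd, hd, rfl⟩ | ⟨c, d, hcd, hd, rfl⟩
      · exfalso
        have e : ∀ k : ℕ, k < n → (if k < a then (0:ℤ) else if k < b then 1 else 2)
            + (if c ≤ k ∧ k ≤ d then 1 else 0) = 1 :=
          fun k hk => congrFun hsum ⟨k, hk⟩
        have := e (n-1) (by omega); split_ifs at this <;> omega
      · exfalso
        have e : ∀ k : ℕ, k < n → (if k < a then (0:ℤ) else if k < b then 1 else 2)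
            + (if k < c then 0 else if k < d then 1 else 2) = 1 :=
          fun k hk => congrFun hsum ⟨k, hk⟩
        have := e (n-1) (by omega); split_ifs at this <;> omega
  · rintro ⟨m, hm, rfl⟩
    simp only [Finset.coe_range, Set.mem_Iio] at hm
    refine ⟨indN n 0 m, indN_mem (by omega) (by omega),
      indN n (m+1) (n-1), indN_mem (by omega) (by omega), rfl, ?_⟩
    funext k
    rcases k with ⟨k, hk⟩
    show (if 0 ≤ k ∧ k ≤ m then (1:ℤ) else 0) + (if m+1 ≤ k ∧ k ≤ n-1 then 1 else 0) = 1
    split_ifs <;> omega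

lemma numDecomp_ones {n : ℕ} (hn : 2 ≤ n) : typeBNumDecomp n (fun _ => (1:ℤ)) = n - 1 := by
  unfold typeBNumDecomp
  rw [decomp_ones hn, Set.ncard_image_of_injOn, Set.ncard_coe_finset, Finset.card_range]
  intro m hm m' hm' heq
  simp only [Finset.coe_range, Set.mem_Iio] at hm hm'
  rcases sym2_eq_elim heq with ⟨h1, -⟩ | ⟨h1, -⟩
  · exact (indN_inj (by omega) (by omega) (by omega) (by omega) h1).2
  · have := indN_inj (by omega) (by omega) (by omega) (by omega) h1
    omega
/-- auxiliary completeness step for mixed decompositions of `spec`. -/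
lemma spec_mixed_aux {n a b c d : ℕ} (hn : 2 ≤ n) (hab : a ≤ b) (hb : b < n)
    (hcd : c < d) (hd : d < n)
    (e : ∀ k : ℕ, k < n → (if a ≤ k ∧ k ≤ b then (1:ℤ) else 0)
      + (if k < c then 0 else if k < d then 1 else 2) = (if k = n - 1 then 2 else 1)) :
    a = 0 ∧ c = b + 1 ∧ d = n - 1 ∧ b + 1 < n - 1 := by
  have hdn : d = n - 1 := by
    by_contra H
    have := e d (by omega)
    split_ifs at this <;> omega
  have hc1 : 1 ≤ c := by
    by_contra H
    have := e a (by omega)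
    split_ifs at this <;> omega
  have ha : a = 0 := by
    have := e 0 (by omega)
    split_ifs at this <;> omega
  have hbc : b < c := by
    have := e c (by omega)
    split_ifs at this <;> omega
  have hcb : c ≤ b + 1 := by
    by_contra H
    have := e (b+1) (by omega)
    split_ifs at this <;> omega
  exact ⟨ha, by omega, hdn, by omega⟩

lemma decomp_spec {n : ℕ} (hn : 2 ≤ n) :
    {z : Sym2 (Fin n → ℤ) | ∃ β ∈ typeBPos n, ∃ γ ∈ typeBPos n,
      z = Sym2.mk β γ ∧ β + γ = (fun k : Fin n => if (k : ℕ) = n - 1 then 2 else 1)} =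
    (fun m : ℕ => Sym2.mk (indN n 0 m) (t2N n (m+1) (n-1))) '' ↑(Finset.range (n-2)) ∪
      {Sym2.mk (indN n 0 (n-1)) (indN n (n-1) (n-1))} := by
  ext z
  constructor
  · rintro ⟨β, hβ, γ, hγ, rfl, hsum⟩
    rw [mem_typeBPos_iff] at hβ hγ
    rcases hβ with ⟨a, b, hab, hb, rfl⟩ | ⟨a, b, hab, hb, rfl⟩
    · rcases hγ with ⟨c, d, hcd, hd, rfl⟩ | ⟨c, d, hcd, hd, rfl⟩
      · -- indN + indN : the pair {ones, e_n}
        have e : ∀ k : ℕ, k < n → (if a ≤ k ∧ k ≤ b then (1:ℤ) else 0)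
            + (if c ≤ k ∧ k ≤ d then 1 else 0) = (if k = n - 1 then 2 else 1) :=
          fun k hk => congrFun hsum ⟨k, hk⟩
        have hbd : b = n - 1 ∧ d = n - 1 := by
          have := e (n-1) (by omega); split_ifs at this <;> omega
        have h0 : a = 0 ∨ c = 0 := by
          have := e 0 (by omega); split_ifs at this <;> omega
        have key : ∀ a' c' : ℕ, a' = 0 →
            (∀ k : ℕ, k < n → (if a' ≤ k ∧ k ≤ n-1 then (1:ℤ) else 0)
              + (if c' ≤ k ∧ k ≤ n-1 then 1 else 0) = (if k = n - 1 then 2 else 1)) →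
            c' ≤ n - 1 → c' = n - 1 := by
          intro a' c' ha' e' hc'
          by_contra H
          have := e' c' (by omega)
          split_ifs at this <;> omega
        rcases h0 with h0 | h0
        · have hc : c = n - 1 := key a c h0 (by
            intro k hk; have := e k hk; rw [hbd.1, hbd.2] at this; exact this) (by omega)
          right
          simp only [Set.mem_singleton_iff]
          rw [h0, hbd.1, hc, hbd.2]
        · have ha : a = n - 1 := key c a h0 (by
            intro k hk; have := e k hk; rw [hbd.1, hbd.2] at this; linarith) (by omega)
          right
          simp only [Set.mem_singleton_iff]
          rw [h0, hbd.1, ha, hbd.2]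
          exact Sym2.eq_swap
      · -- indN + t2N
        have e : ∀ k : ℕ, k < n → (if a ≤ k ∧ k ≤ b then (1:ℤ) else 0)
            + (if k < c then 0 else if k < d then 1 else 2) = (if k = n - 1 then 2 else 1) :=
          fun k hk => congrFun hsum ⟨k, hk⟩
        obtain ⟨ha, hc, hdn, hlt⟩ := spec_mixed_aux hn hab hb hcd hd e
        left
        refine ⟨b, by simp only [Finset.coe_range, Set.mem_Iio]; omega, ?_⟩
        subst ha hc hdn
        rfl
    · rcases hγ with ⟨c, d, hcd, hd, rfl⟩ | ⟨c, d, hcd, hd, rfl⟩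
      · -- t2N + indN
        have e : ∀ k : ℕ, k < n → (if c ≤ k ∧ k ≤ d then (1:ℤ) else 0)
            + (if k < a then 0 else if k < b then 1 else 2) = (if k = n - 1 then 2 else 1) := by
          intro k hk
          have := congrFun hsum ⟨k, hk⟩
          have h2 : (if k < a then (0:ℤ) else if k < b then 1 else 2)
              + (if c ≤ k ∧ k ≤ d then 1 else 0) = (if k = n - 1 then 2 else 1) := this
          linarith
        obtain ⟨hc0, ha, hbn, hlt⟩ := spec_mixed_aux hn hcd hd hab hb e
        left
        refine ⟨d, by simp only [Finset.coe_range, Set.mem_Iio]; omega, ?_⟩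
        subst hc0 ha hbn
        exact Sym2.eq_swap
      · exfalso
        have e : ∀ k : ℕ, k < n → (if k < a then (0:ℤ) else if k < b then 1 else 2)
            + (if k < c then 0 else if k < d then 1 else 2) = (if k = n - 1 then 2 else 1) :=
          fun k hk => congrFun hsum ⟨k, hk⟩
        have := e (n-1) (by omega); split_ifs at this <;> omega
  · rintro (⟨m, hm, rfl⟩ | hz)
    · simp only [Finset.coe_range, Set.mem_Iio] at hm
      refine ⟨indN n 0 m, indN_mem (by omega) (by omega),
        t2N n (m+1) (n-1), t2N_mem (by omega) (by omega), rfl, ?_⟩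
      funext k
      rcases k with ⟨k, hk⟩
      show (if 0 ≤ k ∧ k ≤ m then (1:ℤ) else 0)
        + (if k < m+1 then 0 else if k < n-1 then 1 else 2) = (if k = n - 1 then 2 else 1)
      split_ifs <;> omega
    · simp only [Set.mem_singleton_iff] at hz
      subst hz
      refine ⟨indN n 0 (n-1), indN_mem (by omega) (by omega),
        indN n (n-1) (n-1), indN_mem (by omega) (by omega), rfl, ?_⟩
      funext k
      rcases k with ⟨k, hk⟩
      show (if 0 ≤ k ∧ k ≤ n-1 then (1:ℤ) else 0)
        + (if n-1 ≤ k ∧ k ≤ n-1 then 1 else 0) = (if k = n - 1 then 2 else 1)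
      split_ifs <;> omega

lemma numDecomp_spec {n : ℕ} (hn : 2 ≤ n) :
    typeBNumDecomp n (fun k : Fin n => if (k : ℕ) = n - 1 then 2 else 1) = n - 1 := by
  unfold typeBNumDecomp
  rw [decomp_spec hn]
  have hinj : Set.InjOn (fun m : ℕ => Sym2.mk (indN n 0 m) (t2N n (m+1) (n-1)))
      ↑(Finset.range (n-2)) := by
    intro m hm m' hm' heq
    simp only [Finset.coe_range, Set.mem_Iio] at hm hm'
    rcases sym2_eq_elim heq with ⟨h1, -⟩ | ⟨h1, -⟩
    · exact (indN_inj (by omega) (by omega) (by omega) (by omega) h1).2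
    · exact absurd h1 (indN_ne_t2N (by omega) (by omega) (by omega))
  have hdisj : Disjoint
      ((fun m : ℕ => Sym2.mk (indN n 0 m) (t2N n (m+1) (n-1))) '' ↑(Finset.range (n-2)))
      ({Sym2.mk (indN n 0 (n-1)) (indN n (n-1) (n-1))} : Set (Sym2 (Fin n → ℤ))) := by
    rw [Set.disjoint_singleton_right]
    rintro ⟨m, hm, heq⟩
    simp only [Finset.coe_range, Set.mem_Iio] at hm
    rcases sym2_eq_elim heq with ⟨h1, -⟩ | ⟨h1, -⟩
    · have := (indN_inj (by omega) (by omega) (by omega) (by omega) h1).2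
      omega
    · have := (indN_inj (by omega) (by omega) (by omega) (by omega) h1).1
      omega
  rw [Set.ncard_union_eq hdisj ((Finset.range (n-2)).finite_toSet.image _)
    (Set.finite_singleton _)]
  rw [Set.ncard_image_of_injOn hinj, Set.ncard_coe_finset, Finset.card_range,
    Set.ncard_singleton]
  omega
/-- one of the "middle" decompositions of `t2N n 0 b`. -/
def midA (n b m : ℕ) : Sym2 (Fin n → ℤ) :=
  if m + 1 < b then Sym2.mk (indN n 0 m) (t2N n (m+1) b)
  else Sym2.mk (indN n 0 (m+1)) (t2N n b (m+2))

lemma numDecomp_mid {n b : ℕ} (hn : 2 ≤ n) (hb1 : 1 ≤ b) (hb2 : b ≤ n - 2) :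
    typeBNumDecomp n (t2N n 0 b) ≠ n - 1 := by
  intro hcard
  unfold typeBNumDecomp at hcard
  set Cp : Sym2 (Fin n → ℤ) := Sym2.mk (indN n 0 (n-1)) (indN n b (n-1)) with hCp
  set Bp : Sym2 (Fin n → ℤ) := Sym2.mk (t2N n 0 (n-1)) (indN n b (n-2)) with hBp
  set S : Finset (Sym2 (Fin n → ℤ)) :=
    insert Cp (insert Bp ((Finset.range (n-2)).image (midA n b))) with hS
  -- injectivity of midA
  have hinj : Set.InjOn (midA n b) ↑(Finset.range (n-2)) := by
    intro m hm m' hm' heq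
    simp only [Finset.coe_range, Set.mem_Iio] at hm hm'
    unfold midA at heq
    split_ifs at heq <;>
      rcases sym2_eq_elim heq with ⟨hx, -⟩ | ⟨hx, -⟩ <;>
      first
        | exact absurd hx (indN_ne_t2N (by omega) (by omega) (by omega))
        | (have := indN_inj (by omega) (by omega) (by omega) (by omega) hx; omega)
  have hBnotin : Bp ∉ (Finset.range (n-2)).image (midA n b) := by
    rw [Finset.mem_image]
    rintro ⟨m, hm, heq⟩
    rw [Finset.mem_range] at hm
    unfold midA at heq
    rw [hBp] at heq
    split_ifs at heq <;>
      rcases sym2_eq_elim heq with ⟨hx, -⟩ | ⟨hx, -⟩ <;>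
      first
        | exact absurd hx (indN_ne_t2N (by omega) (by omega) (by omega))
        | (have := indN_inj (by omega) (by omega) (by omega) (by omega) hx; omega)
  have hCnotin : Cp ∉ insert Bp ((Finset.range (n-2)).image (midA n b)) := by
    rw [Finset.mem_insert, Finset.mem_image]
    rintro (heq | ⟨m, hm, heq⟩)
    · rw [hCp, hBp] at heq
      rcases sym2_eq_elim heq with ⟨hx, -⟩ | ⟨hx, -⟩
      · exact absurd hx (indN_ne_t2N (by omega) (by omega) (by omega))
      · have := indN_inj (by omega) (by omega) (by omega) (by omega) hx; omega
    · rw [Finset.mem_range] at hm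
      unfold midA at heq
      rw [hCp] at heq
      split_ifs at heq <;>
        rcases sym2_eq_elim heq.symm with ⟨hx, -⟩ | ⟨hx, -⟩ <;>
        first
          | exact absurd hx (indN_ne_t2N (by omega) (by omega) (by omega))
          | (have := indN_inj (by omega) (by omega) (by omega) (by omega) hx; omega)
  have hScard : S.card = n := by
    rw [hS, Finset.card_insert_of_notMem hCnotin, Finset.card_insert_of_notMem hBnotin,
      Finset.card_image_of_injOn hinj, Finset.card_range]
    omega
  have hsub : (↑S : Set (Sym2 (Fin n → ℤ))) ⊆ {z : Sym2 (Fin n → ℤ) | ∃ β ∈ typeBPos n,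
      ∃ γ ∈ typeBPos n, z = Sym2.mk β γ ∧ β + γ = t2N n 0 b} := by
    intro z hz
    simp only [hS, Finset.coe_insert, Set.mem_insert_iff, Finset.coe_image,
      Finset.coe_range, Set.mem_image, Set.mem_Iio] at hz
    rcases hz with rfl | rfl | ⟨m, hm, rfl⟩
    · refine ⟨indN n 0 (n-1), indN_mem (by omega) (by omega),
        indN n b (n-1), indN_mem (by omega) (by omega), rfl, ?_⟩
      funext k
      rcases k with ⟨k, hk⟩
      show (if 0 ≤ k ∧ k ≤ n-1 then (1:ℤ) else 0) + (if b ≤ k ∧ k ≤ n-1 then 1 else 0)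
        = (if k < 0 then 0 else if k < b then 1 else 2)
      split_ifs <;> omega
    · refine ⟨t2N n 0 (n-1), t2N_mem (by omega) (by omega),
        indN n b (n-2), indN_mem (by omega) (by omega), rfl, ?_⟩
      funext k
      rcases k with ⟨k, hk⟩
      show (if k < 0 then (0:ℤ) else if k < n-1 then 1 else 2)
        + (if b ≤ k ∧ k ≤ n-2 then 1 else 0) = (if k < 0 then 0 else if k < b then 1 else 2)
      split_ifs <;> omega
    · unfold midA
      split_ifs with hcase
      · refine ⟨indN n 0 m, indN_mem (by omega) (by omega),
          t2N n (m+1) b, t2N_mem (by omega) (by omega), rfl, ?_⟩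
        funext k
        rcases k with ⟨k, hk⟩
        show (if 0 ≤ k ∧ k ≤ m then (1:ℤ) else 0)
          + (if k < m+1 then 0 else if k < b then 1 else 2)
          = (if k < 0 then 0 else if k < b then 1 else 2)
        split_ifs <;> omega
      · refine ⟨indN n 0 (m+1), indN_mem (by omega) (by omega),
          t2N n b (m+2), t2N_mem (by omega) (by omega), rfl, ?_⟩
        funext k
        rcases k with ⟨k, hk⟩
        show (if 0 ≤ k ∧ k ≤ m+1 then (1:ℤ) else 0)
          + (if k < b then 0 else if k < m+2 then 1 else 2)
          = (if k < 0 then 0 else if k < b then 1 else 2)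
        split_ifs <;> omega
  have hfin : {z : Sym2 (Fin n → ℤ) | ∃ β ∈ typeBPos n,
      ∃ γ ∈ typeBPos n, z = Sym2.mk β γ ∧ β + γ = t2N n 0 b}.Finite := by
    by_contra H
    rw [Set.Infinite.ncard H] at hcard
    omega
  have hle := Set.ncard_le_ncard hsub hfin
  rw [Set.ncard_coe_finset, hScard, hcard] at hle
  omega
lemma ones_eq {n : ℕ} (hn : 1 ≤ n) : (fun _ => (1:ℤ)) = indN n 0 (n-1) := by
  funext k
  rcases k with ⟨k, hk⟩
  show (1:ℤ) = (if 0 ≤ k ∧ k ≤ n-1 then 1 else 0)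
  split_ifs <;> omega

lemma spec_eq {n : ℕ} (hn : 2 ≤ n) :
    (fun k : Fin n => if (k : ℕ) = n - 1 then (2:ℤ) else 1) = t2N n 0 (n-1) := by
  funext k
  rcases k with ⟨k, hk⟩
  show (if k = n - 1 then (2:ℤ) else 1) = (if k < 0 then 0 else if k < n-1 then 1 else 2)
  split_ifs <;> omega

lemma full_support_classify {n : ℕ} (hn : 2 ≤ n) {v : Fin n → ℤ} (hv : v ∈ typeBPos n)
    (hpos : ∀ k, 0 < v k) :
    v = (fun _ => 1) ∨ ∃ b : ℕ, 1 ≤ b ∧ b < n ∧ v = t2N n 0 b := by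
  rw [mem_typeBPos_iff] at hv
  rcases hv with ⟨a, b, hab, hb, rfl⟩ | ⟨a, b, hab, hb, rfl⟩
  · left
    have h0 := hpos ⟨0, by omega⟩
    have h1 := hpos ⟨n-1, by omega⟩
    rw [indN_apply'] at h0 h1
    have hab' : a = 0 ∧ b = n - 1 := by split_ifs at h0 h1 <;> omega
    obtain ⟨rfl, rfl⟩ := hab'
    exact (ones_eq (by omega)).symm
  · right
    have h0 := hpos ⟨0, by omega⟩
    rw [t2N_apply'] at h0
    have ha : a = 0 := by split_ifs at h0 <;> omega
    subst ha
    exact ⟨b, by omega, hb, rfl⟩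

/-- In the root system of type `B n` (`n ≥ 2`), the positive roots `α` with full support
satisfying `s(α) = n - 1` are exactly `α₁ + α₂ + ⋯ + αₙ` and
`α₁ + α₂ + ⋯ + α_{n-1} + 2αₙ`. -/
theorem typeB_fullSupport_numDecomp_eq :
    ∀ n : ℕ, 2 ≤ n →
      {v | v ∈ typeBPos n ∧ (∀ k, 0 < v k) ∧ typeBNumDecomp n v = n - 1} =
        ({fun _ => 1, fun k : Fin n => if (k : ℕ) = n - 1 then 2 else 1} : Set (Fin n → ℤ)) := by
  intro n hn
  ext v
  simp only [Set.mem_setOf_eq, Set.mem_insert_iff, Set.mem_singleton_iff]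
  constructor
  · rintro ⟨hv, hpos, hs⟩
    rcases full_support_classify hn hv hpos with rfl | ⟨b, hb1, hb2, rfl⟩
    · left; rfl
    · by_cases hbb : b = n - 1
      · right
        subst hbb
        rw [spec_eq hn]
      · exfalso
        exact numDecomp_mid hn hb1 (by omega) hs
  · rintro (rfl | rfl)
    · refine ⟨?_, fun k => by norm_num, numDecomp_ones hn⟩
      rw [ones_eq (by omega)]
      exact indN_mem (by omega) (by omega)
    · refine ⟨?_, fun k => ?_, numDecomp_spec hn⟩
      · rw [spec_eq hn]
        exact t2N_mem (by omega) (by omega)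
      · show (0:ℤ) < if (k : ℕ) = n - 1 then 2 else 1
        split_ifs <;> norm_num
end
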